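/- arXiv:2402.00301 — 3 statements merged into one kernel-verified Lean document; each statement's English description precedes it below -/
import Mathlib

section
/- A projective collineation with four distinct fixed points, each three of which are noncollinear, is the identity: Let σ be a collineation (a bijection of the points, with an induced bijection σ' of the lines, such that a point X is incident with a line l if and only if σ(X) is incident with σ'(l)), and suppose σ is projective, i.e., for every line l the restriction of σ to the range of l is a projectivity onto the range of σ'(l), and for every point Q the restriction of σ' to the pencil Q* is a projectivity onto the pencil (σQ)*. If there exist four distinct points fixed by σ, each three of which are noncollinear, then σ is the identity on points. -/
open Configuration

universe u
variable (P L : Type u) [Membership P L]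

/-- Three points are collinear if some line passes through all three. -/
def Col (A B C : P) : Prop := ∃ l : L, A ∈ l ∧ B ∈ l ∧ C ∈ l

/-- Every line of `L` is incident with at least `n` distinct points. -/
def LinesHaveAtLeast (n : ℕ) : Prop :=
  ∀ l : L, ∃ s : Finset P, n ≤ s.card ∧ ∀ X ∈ s, X ∈ l

/-- An object of the plane: the range of a line or the pencil of a point. -/
inductive Obj (P L : Type u) where
  | range : L → Obj P L
  | pencil : P → Obj P L

/-- The carrier of an object: the points on the line, resp. the lines through
the point. -/
abbrev Obj.Carrier {P L : Type u} [Membership P L] : Obj P L → Type u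
  | .range l => {X : P // X ∈ l}
  | .pencil U => {k : L // U ∈ k}

/-- `f` is the perspectivity from the range of `l` to the range of `m` with
center `O`, a point outside both `l` and `m` : each point `X` of `l` is mapped
to the point `(OX)·m`, i.e. `O`, `X` and `f X` are collinear. -/
def IsRangePersp (l m : L) (f : {X : P // X ∈ l} → {Y : P // Y ∈ m}) : Prop :=
  ∃ O : P, O ∉ l ∧ O ∉ m ∧
    ∀ X : {X : P // X ∈ l}, ∃ k : L, O ∈ k ∧ (X : P) ∈ k ∧ ((f X : P)) ∈ k

/-- `f` is the elementary map from the pencil of `U` to the range of a line `l`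
not through `U` : each line `k` through `U` is sent to the point `k·l`. -/
def IsElemMap (U : P) (l : L) (f : {k : L // U ∈ k} → {X : P // X ∈ l}) : Prop :=
  U ∉ l ∧ ∀ k : {k : L // U ∈ k}, ((f k : P)) ∈ (k : L)

/-- `f` is the elementary map from the range of a line `l` to the pencil of a
point `U` outside `l` : each point `X` of `l` is sent to the line `UX`. -/
def IsElemInv (U : P) (l : L) (f : {X : P // X ∈ l} → {k : L // U ∈ k}) : Prop :=
  U ∉ l ∧ ∀ X : {X : P // X ∈ l}, (X : P) ∈ ((f X : L))

/-- A projectivity (between ranges or pencils) : a composite of finitely many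
perspectivities and elementary maps. -/
inductive IsProj : (a b : Obj P L) → (a.Carrier → b.Carrier) → Prop where
  | persp {l m : L} {f : {X : P // X ∈ l} → {Y : P // Y ∈ m}} :
      IsRangePersp P L l m f → IsProj (.range l) (.range m) f
  | elem {U : P} {l : L} {f : {k : L // U ∈ k} → {X : P // X ∈ l}} :
      IsElemMap P L U l f → IsProj (.pencil U) (.range l) f
  | elemInv {U : P} {l : L} {f : {X : P // X ∈ l} → {k : L // U ∈ k}} :
      IsElemInv P L U l f → IsProj (.range l) (.pencil U) f
  | comp {a b c : Obj P L} {f : a.Carrier → b.Carrier} {g : b.Carrier → c.Carrier} :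
      IsProj a b f → IsProj b c g → IsProj a c (g ∘ f)

/-- Axiom T: every projectivity of a range or a pencil onto itself having three
distinct fixed elements is the identity. -/
def AxiomT : Prop :=
  ∀ (a : Obj P L) (f : a.Carrier → a.Carrier), IsProj P L a a f →
    (∃ x y z : a.Carrier, x ≠ y ∧ x ≠ z ∧ y ≠ z ∧ f x = x ∧ f y = y ∧ f z = z) →
    ∀ w, f w = w


lemma cast_proj {P L : Type u} [Membership P L] {l m : L} (hm : m = l)
    (f : {X : P // X ∈ l} → {Y : P // Y ∈ m})
    (hf : IsProj P L (.range l) (.range m) f) :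
    IsProj P L (.range l) (.range l) (fun X => ⟨(f X).1, hm ▸ (f X).2⟩) := by
  subst hm
  exact hf

/-- **A projective collineation with four distinct fixed points, each three of
which are noncollinear, is the identity.** Here a collineation is a bijection
`σ` of the points together with an induced bijection `σ'` of the lines such
that `X ∈ l` if and only if `σ X ∈ σ' l`; it is projective if for every line
`l` the restriction of `σ` to the range of `l` is a projectivity onto the range
of `σ' l`, and for every point `Q` the restriction of `σ'` to the pencil `Q*`
is a projectivity onto the pencil `(σ Q)*`. -/
theorem projective_collineation_four_fixed_points
    [Configuration.ProjectivePlane P L]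
    (h6 : LinesHaveAtLeast P L 6) (hT : AxiomT P L)
    (σ : P ≃ P) (σ' : L ≃ L)
    (hcompat : ∀ (X : P) (l : L), X ∈ l ↔ σ X ∈ σ' l)
    (hprojR : ∀ l : L,
      IsProj P L (.range l) (.range (σ' l))
        (fun X : {X : P // X ∈ l} => (⟨σ X.1, (hcompat X.1 l).mp X.2⟩ : {Y : P // Y ∈ σ' l})))
    (hprojP : ∀ Q : P,
      IsProj P L (.pencil Q) (.pencil (σ Q))
        (fun k : {k : L // Q ∈ k} => (⟨σ' k.1, (hcompat Q k.1).mp k.2⟩ : {k' : L // σ Q ∈ k'})))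
    (A B C D : P)
    (hAB : A ≠ B) (hAC : A ≠ C) (hAD : A ≠ D) (hBC : B ≠ C) (hBD : B ≠ D) (hCD : C ≠ D)
    (hABC : ¬ Col P L A B C) (hABD : ¬ Col P L A B D)
    (hACD : ¬ Col P L A C D) (hBCD : ¬ Col P L B C D)
    (hA : σ A = A) (hB : σ B = B) (hC : σ C = C) (hD : σ D = D) :
    ∀ X : P, σ X = X := by
  classical
  have uniq_line : ∀ {p q : P} {l m : L}, p ≠ q → p ∈ l → q ∈ l → p ∈ m → q ∈ m → l = m :=
    fun hpq h1 h2 h3 h4 => (Nondegenerate.eq_or_eq h1 h2 h3 h4).resolve_left hpq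
  have uniq_pt : ∀ {p q : P} {l m : L}, l ≠ m → p ∈ l → p ∈ m → q ∈ l → q ∈ m → p = q :=
    fun hlm h1 h2 h3 h4 => (Nondegenerate.eq_or_eq h1 h3 h2 h4).resolve_right hlm
  -- a line through two fixed points is fixed
  have fixline : ∀ {x y : P} {l : L}, x ≠ y → σ x = x → σ y = y → x ∈ l → y ∈ l →
      σ' l = l := by
    intro x y l hxy hx hy hxl hyl
    have h1 : x ∈ σ' l := by have := (hcompat x l).mp hxl; rwa [hx] at this
    have h2 : y ∈ σ' l := by have := (hcompat y l).mp hyl; rwa [hy] at this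
    exact uniq_line hxy h1 h2 hxl hyl
  -- the intersection of two distinct fixed lines is a fixed point
  have fixpt : ∀ {l m : L} {p : P}, l ≠ m → σ' l = l → σ' m = m → p ∈ l → p ∈ m →
      σ p = p := by
    intro l m p hlm hl hm hpl hpm
    have h1 : σ p ∈ l := by have := (hcompat p l).mp hpl; rwa [hl] at this
    have h2 : σ p ∈ m := by have := (hcompat p m).mp hpm; rwa [hm] at this
    exact uniq_pt hlm h1 h2 hpl hpm
  -- a fixed line with three fixed points is pointwise fixed (Axiom T)
  have pointwise : ∀ {l : L}, σ' l = l → ∀ {x y z : P}, x ≠ y → x ≠ z → y ≠ z →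
      x ∈ l → y ∈ l → z ∈ l → σ x = x → σ y = y → σ z = z →
      ∀ {w : P}, w ∈ l → σ w = w := by
    intro l hl x y z hxy hxz hyz hxl hyl hzl hfx hfy hfz w hwl
    have hp := cast_proj hl _ (hprojR l)
    have hid := hT (.range l) _ hp
      ⟨⟨x, hxl⟩, ⟨y, hyl⟩, ⟨z, hzl⟩,
        fun h => hxy (congrArg Subtype.val h),
        fun h => hxz (congrArg Subtype.val h),
        fun h => hyz (congrArg Subtype.val h),
        Subtype.ext hfx, Subtype.ext hfy, Subtype.ext hfz⟩
    exact congrArg Subtype.val (hid ⟨w, hwl⟩)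
  -- the six joining lines
  set lAB : L := HasLines.mkLine hAB with hlABdef
  have hAlAB : A ∈ lAB := (HasLines.mkLine_ax hAB).1
  have hBlAB : B ∈ lAB := (HasLines.mkLine_ax hAB).2
  set lAC : L := HasLines.mkLine hAC with hlACdef
  have hAlAC : A ∈ lAC := (HasLines.mkLine_ax hAC).1
  have hClAC : C ∈ lAC := (HasLines.mkLine_ax hAC).2
  set lAD : L := HasLines.mkLine hAD with hlADdef
  have hAlAD : A ∈ lAD := (HasLines.mkLine_ax hAD).1
  have hDlAD : D ∈ lAD := (HasLines.mkLine_ax hAD).2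
  set lBC : L := HasLines.mkLine hBC with hlBCdef
  have hBlBC : B ∈ lBC := (HasLines.mkLine_ax hBC).1
  have hClBC : C ∈ lBC := (HasLines.mkLine_ax hBC).2
  set lBD : L := HasLines.mkLine hBD with hlBDdef
  have hBlBD : B ∈ lBD := (HasLines.mkLine_ax hBD).1
  have hDlBD : D ∈ lBD := (HasLines.mkLine_ax hBD).2
  set lCD : L := HasLines.mkLine hCD with hlCDdef
  have hClCD : C ∈ lCD := (HasLines.mkLine_ax hCD).1
  have hDlCD : D ∈ lCD := (HasLines.mkLine_ax hCD).2
  -- the joining lines are fixed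
  have fAB : σ' lAB = lAB := fixline hAB hA hB hAlAB hBlAB
  have fAC : σ' lAC = lAC := fixline hAC hA hC hAlAC hClAC
  have fAD : σ' lAD = lAD := fixline hAD hA hD hAlAD hDlAD
  have fBC : σ' lBC = lBC := fixline hBC hB hC hBlBC hClBC
  have fBD : σ' lBD = lBD := fixline hBD hB hD hBlBD hDlBD
  have fCD : σ' lCD = lCD := fixline hCD hC hD hClCD hDlCD
  -- useful non-incidences
  have hAnBC : A ∉ lBC := fun h => hABC ⟨lBC, h, hBlBC, hClBC⟩
  have hBnAC : B ∉ lAC := fun h => hABC ⟨lAC, hAlAC, h, hClAC⟩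
  have hCnAB : C ∉ lAB := fun h => hABC ⟨lAB, hAlAB, hBlAB, h⟩
  have hAnCD : A ∉ lCD := fun h => hACD ⟨lCD, h, hClCD, hDlCD⟩
  have hBnAD : B ∉ lAD := fun h => hABD ⟨lAD, hAlAD, h, hDlAD⟩
  have hCnBD : C ∉ lBD := fun h => hBCD ⟨lBD, hBlBD, h, hDlBD⟩
  -- pointwise fixedness of lAB, lAC, lBC via a third fixed point on each
  have hABCD : lAB ≠ lCD := fun h => hCnAB (h ▸ hClCD)
  have hACBD : lAC ≠ lBD := fun h => hBnAC (h ▸ hBlBD)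
  have hBCAD : lBC ≠ lAD := fun h => hAnBC (h ▸ hAlAD)
  obtain ⟨hE1l, hE1m⟩ := HasPoints.mkPoint_ax (P := P) hABCD
  set E1 : P := HasPoints.mkPoint (P := P) hABCD
  obtain ⟨hE2l, hE2m⟩ := HasPoints.mkPoint_ax (P := P) hACBD
  set E2 : P := HasPoints.mkPoint (P := P) hACBD
  obtain ⟨hE3l, hE3m⟩ := HasPoints.mkPoint_ax (P := P) hBCAD
  set E3 : P := HasPoints.mkPoint (P := P) hBCAD
  have fE1 : σ E1 = E1 := fixpt hABCD fAB fCD hE1l hE1m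
  have fE2 : σ E2 = E2 := fixpt hACBD fAC fBD hE2l hE2m
  have fE3 : σ E3 = E3 := fixpt hBCAD fBC fAD hE3l hE3m
  have hAE1 : A ≠ E1 := fun h => hAnCD (h ▸ hE1m)
  have hBE1 : B ≠ E1 := fun h => (fun hh => hBCD ⟨lCD, hh, hClCD, hDlCD⟩) (h ▸ hE1m)
  have hAE2 : A ≠ E2 := fun h => (fun hh => hABD ⟨lBD, hh, hBlBD, hDlBD⟩) (h ▸ hE2m)
  have hCE2 : C ≠ E2 := fun h => hCnBD (h ▸ hE2m)
  have hBE3 : B ≠ E3 := fun h => hBnAD (h ▸ hE3m)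
  have hCE3 : C ≠ E3 := fun h => (fun hh => hACD ⟨lAD, hAlAD, hh, hDlAD⟩) (h ▸ hE3m)
  have pwAB : ∀ {w : P}, w ∈ lAB → σ w = w :=
    fun hw => pointwise fAB hAB hAE1 hBE1 hAlAB hBlAB hE1l hA hB fE1 hw
  have pwAC : ∀ {w : P}, w ∈ lAC → σ w = w :=
    fun hw => pointwise fAC hAC hAE2 hCE2 hAlAC hClAC hE2l hA hC fE2 hw
  have pwBC : ∀ {w : P}, w ∈ lBC → σ w = w :=
    fun hw => pointwise fBC hBC hBE3 hCE3 hBlBC hClBC hE3l hB hC fE3 hw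
  -- the general point
  intro X
  by_cases hX1 : X ∈ lAB
  · exact pwAB hX1
  by_cases hX2 : X ∈ lAC
  · exact pwAC hX2
  have hXA : X ≠ A := fun h => hX1 (h ▸ hAlAB)
  have hXB : X ≠ B := fun h => hX1 (h ▸ hBlAB)
  set lXA : L := HasLines.mkLine hXA with hlXAdef
  have hXlXA : X ∈ lXA := (HasLines.mkLine_ax hXA).1
  have hAlXA : A ∈ lXA := (HasLines.mkLine_ax hXA).2
  set lXB : L := HasLines.mkLine hXB with hlXBdef
  have hXlXB : X ∈ lXB := (HasLines.mkLine_ax hXB).1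
  have hBlXB : B ∈ lXB := (HasLines.mkLine_ax hXB).2
  -- lXA meets lBC in a fixed point ≠ A
  have hXABC : lXA ≠ lBC := fun h => hAnBC (h ▸ hAlXA)
  obtain ⟨hP1l, hP1m⟩ := HasPoints.mkPoint_ax (P := P) hXABC
  set P1 : P := HasPoints.mkPoint (P := P) hXABC
  have fP1 : σ P1 = P1 := pwBC hP1m
  have hAP1 : A ≠ P1 := fun h => hAnBC (h ▸ hP1m)
  have fXA : σ' lXA = lXA := fixline hAP1 hA fP1 hAlXA hP1l
  have hσX1 : σ X ∈ lXA := by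
    have := (hcompat X lXA).mp hXlXA; rwa [fXA] at this
  -- lXB meets lAC in a fixed point ≠ B
  have hXBAC : lXB ≠ lAC := fun h => hBnAC (h ▸ hBlXB)
  obtain ⟨hP2l, hP2m⟩ := HasPoints.mkPoint_ax (P := P) hXBAC
  set P2 : P := HasPoints.mkPoint (P := P) hXBAC
  have fP2 : σ P2 = P2 := pwAC hP2m
  have hBP2 : B ≠ P2 := fun h => hBnAC (h ▸ hP2m)
  have fXB : σ' lXB = lXB := fixline hBP2 hB fP2 hBlXB hP2l
  have hσX2 : σ X ∈ lXB := by
    have := (hcompat X lXB).mp hXlXB; rwa [fXB] at this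
  -- lXA ≠ lXB, hence σ X = X
  have hne : lXA ≠ lXB := by
    intro h
    have : lXA = lAB := uniq_line hAB hAlXA (h ▸ hBlXB) hAlAB hBlAB
    exact hX1 (this ▸ hXlXA)
  exact uniq_pt hne hσX1 hσX2 hXlXA hXlXB
end

section
/- Five-point conic: Given any five distinct points, each three of which are noncollinear, there exists a conic containing all five points; moreover any two conics containing these five points are equal as sets of points. -/
open Configuration

universe u
variable (P L : Type u) [Membership P L]

/-- The Steiner conic `κ(π;U,V)` defined by a projectivity `π : U* → V*` :
the locus of points `l·π(l)` for `l` a line through `U`. -/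
def conicSet (U V : P) (π : {k : L // U ∈ k} → {k : L // V ∈ k}) : Set P :=
  {X : P | ∃ k : {k : L // U ∈ k}, X ∈ (k : L) ∧ X ∈ ((π k : L))}

/-- A conic: the Steiner conic of some nonperspective projectivity between the
pencils of two distinct points. -/
def IsConic (κ : Set P) : Prop :=
  ∃ (U V : P) (π : {k : L // U ∈ k} → {k : L // V ∈ k}),
    U ≠ V ∧ IsProj P L (.pencil U) (.pencil V) π ∧
    (∀ k : {k : L // U ∈ k}, ((π k : L)) ≠ (k : L)) ∧
    κ = conicSet P L U V π

/-- A line `t` is tangent to `κ` at `Q` if `Q` is on `κ` and on `t`, and is the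
only point of `κ` incident with `t`. -/
def IsTangent (κ : Set P) (t : L) (Q : P) : Prop :=
  Q ∈ κ ∧ Q ∈ t ∧ ∀ X ∈ κ, X ∈ t → X = Q

/-- A line is a secant of `κ` if it passes through two distinct points of `κ`. -/
def IsSecant (κ : Set P) (s : L) : Prop :=
  ∃ X Y : P, X ≠ Y ∧ X ∈ κ ∧ Y ∈ κ ∧ X ∈ s ∧ Y ∈ s

/-- Axiom P: the tangents to a conic at any three distinct points of the conic
are nonconcurrent. -/
def AxiomP : Prop :=
  ∀ κ : Set P, IsConic P L κ →
    ∀ X Y Z : P, X ∈ κ → Y ∈ κ → Z ∈ κ → X ≠ Y → X ≠ Z → Y ≠ Z →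
      ∀ tx ty tz : L, IsTangent P L κ tx X → IsTangent P L κ ty Y → IsTangent P L κ tz Z →
        ¬ ∃ W : P, W ∈ tx ∧ W ∈ ty ∧ W ∈ tz


/-! ### Auxiliary development -/

namespace FPC

open Configuration

variable {P L : Type u} [Membership P L] [Configuration.ProjectivePlane P L]

/-- Uniqueness of the intersection point of two distinct lines. -/
lemma uniqP {A B : P} {l m : L} (hlm : l ≠ m) (hAl : A ∈ l) (hAm : A ∈ m)
    (hBl : B ∈ l) (hBm : B ∈ m) : A = B :=
  (Nondegenerate.eq_or_eq hAl hBl hAm hBm).resolve_right hlm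

/-- Uniqueness of the line through two distinct points. -/
lemma uniqL {A B : P} {l m : L} (hAB : A ≠ B) (hAl : A ∈ l) (hBl : B ∈ l)
    (hAm : A ∈ m) (hBm : B ∈ m) : l = m :=
  (Nondegenerate.eq_or_eq hAl hBl hAm hBm).resolve_left hAB

/-- The line joining two distinct points. -/
noncomputable def ln {A B : P} (h : A ≠ B) : L := HasLines.mkLine h

lemma ln_left {A B : P} (h : A ≠ B) : A ∈ (ln h : L) := (HasLines.mkLine_ax h).1
lemma ln_right {A B : P} (h : A ≠ B) : B ∈ (ln h : L) := (HasLines.mkLine_ax h).2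

lemma ln_eq {A B : P} (h : A ≠ B) {n : L} (hA : A ∈ n) (hB : B ∈ n) : ln h = n :=
  uniqL h (ln_left h) (ln_right h) hA hB

/-- The intersection point of two distinct lines. -/
noncomputable def pt {l m : L} (h : l ≠ m) : P := HasPoints.mkPoint h

lemma pt_left {l m : L} (h : l ≠ m) : (pt h : P) ∈ l := (HasPoints.mkPoint_ax h).1
lemma pt_right {l m : L} (h : l ≠ m) : (pt h : P) ∈ m := (HasPoints.mkPoint_ax h).2

lemma pt_eq {l m : L} (h : l ≠ m) {X : P} (hXl : X ∈ l) (hXm : X ∈ m) : pt h = X :=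
  uniqP h (pt_left h) (pt_right h) hXl hXm

section maps

/-- Elementary map from a pencil to a range. -/
noncomputable def elemMap (U : P) (l : L) (hU : U ∉ l) :
    {k : L // U ∈ k} → {X : P // X ∈ l} :=
  fun k => ⟨pt (show (k : L) ≠ l from fun h => hU (h ▸ k.2)), pt_right _⟩

lemma elemMap_mem (U : P) (l : L) (hU : U ∉ l) (k : {k : L // U ∈ k}) :
    (elemMap U l hU k : P) ∈ (k : L) := pt_left _

lemma elemMap_isProj (U : P) (l : L) (hU : U ∉ l) :
    IsProj P L (.pencil U) (.range l) (elemMap U l hU) :=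
  IsProj.elem ⟨hU, fun k => elemMap_mem U l hU k⟩

lemma elemMap_eq (U : P) (l : L) (hU : U ∉ l) {k : {k : L // U ∈ k}} {Y : P}
    (hY : Y ∈ (k : L)) (hYl : Y ∈ l) : (elemMap U l hU k : P) = Y :=
  pt_eq _ hY hYl

/-- Elementary map from a range to a pencil. -/
noncomputable def elemInvMap (U : P) (l : L) (hU : U ∉ l) :
    {X : P // X ∈ l} → {k : L // U ∈ k} :=
  fun X => ⟨ln (show U ≠ (X : P) from fun h => hU (h ▸ X.2)), ln_left _⟩

lemma elemInvMap_mem (U : P) (l : L) (hU : U ∉ l) (X : {X : P // X ∈ l}) :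
    (X : P) ∈ (elemInvMap U l hU X : L) := ln_right _

lemma elemInvMap_isProj (U : P) (l : L) (hU : U ∉ l) :
    IsProj P L (.range l) (.pencil U) (elemInvMap U l hU) :=
  IsProj.elemInv ⟨hU, fun X => elemInvMap_mem U l hU X⟩

lemma elemInvMap_eq (U : P) (l : L) (hU : U ∉ l) {X : {X : P // X ∈ l}} {n : L}
    (hU' : U ∈ n) (hX : (X : P) ∈ n) : (elemInvMap U l hU X : L) = n :=
  ln_eq _ hU' hX

/-- Perspectivity between two ranges with center `O`. -/
noncomputable def perspMap (O : P) (l m : L) (hOl : O ∉ l) (hOm : O ∉ m) :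
    {X : P // X ∈ l} → {Y : P // Y ∈ m} :=
  fun X => ⟨pt (show (ln (show O ≠ (X : P) from fun h => hOl (h ▸ X.2)) : L) ≠ m from
      fun h => hOm (h ▸ ln_left _)), pt_right _⟩

lemma perspMap_spec (O : P) (l m : L) (hOl : O ∉ l) (hOm : O ∉ m) (X : {X : P // X ∈ l}) :
    ∃ n : L, O ∈ n ∧ (X : P) ∈ n ∧ (perspMap O l m hOl hOm X : P) ∈ n :=
  ⟨ln _, ln_left _, ln_right _, pt_left _⟩

lemma perspMap_collinear (O : P) (l m : L) (hOl : O ∉ l) (hOm : O ∉ m)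
    (X : {X : P // X ∈ l}) {n : L} (hOn : O ∈ n) (hXn : (X : P) ∈ n) :
    (perspMap O l m hOl hOm X : P) ∈ n := by
  obtain ⟨k, hOk, hXk, hfk⟩ := perspMap_spec O l m hOl hOm X
  have hOX : O ≠ (X : P) := fun h => hOl (h ▸ X.2)
  rwa [uniqL hOX hOk hXk hOn hXn] at hfk

lemma perspMap_isProj (O : P) (l m : L) (hOl : O ∉ l) (hOm : O ∉ m) :
    IsProj P L (.range l) (.range m) (perspMap O l m hOl hOm) :=
  IsProj.persp ⟨O, hOl, hOm, perspMap_spec O l m hOl hOm⟩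

lemma perspMap_eq (O : P) (l m : L) (hOl : O ∉ l) (hOm : O ∉ m)
    {X : {X : P // X ∈ l}} {Y : P} {n : L} (hOn : O ∈ n) (hXn : (X : P) ∈ n)
    (hYn : Y ∈ n) (hYm : Y ∈ m) : (perspMap O l m hOl hOm X : P) = Y := by
  have hO : O ≠ (X : P) := fun h => hOl (h ▸ X.2)
  have h1 : (ln hO : L) = n := ln_eq _ hOn hXn
  exact pt_eq _ (h1 ▸ hYn) hYm

end maps

end FPC

set_option linter.unusedSectionVars false

namespace FPC

open Configuration

variable {P L : Type u} [Membership P L] [Configuration.ProjectivePlane P L]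

/-- Every projectivity has an inverse projectivity. -/
lemma exists_inverse {a b : Obj P L} {f : a.Carrier → b.Carrier}
    (hf : IsProj P L a b f) :
    ∃ g : b.Carrier → a.Carrier, IsProj P L b a g ∧ (∀ x, g (f x) = x) ∧ (∀ y, f (g y) = y) := by
  induction hf with
  | persp hf =>
    obtain ⟨O, hOl, hOm, hspec⟩ := hf
    rename_i l m f
    refine ⟨perspMap O m l hOm hOl, perspMap_isProj O m l hOm hOl, ?_, ?_⟩
    · intro X
      obtain ⟨n, hOn, hXn, hfXn⟩ := hspec X
      apply Subtype.ext
      exact perspMap_eq O m l hOm hOl hOn hfXn hXn X.2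
    · intro Y
      obtain ⟨n, hOn, hgYn, hfgYn⟩ := hspec (perspMap O m l hOm hOl Y)
      -- n contains O and gY ; the line O-Y also contains O and gY
      have hOgY : O ≠ ((perspMap O m l hOm hOl Y : P)) := fun h => hOl (h ▸ (perspMap O m l hOm hOl Y).2)
      obtain ⟨n', hOn', hYn', hgYn'⟩ := perspMap_spec O m l hOm hOl Y
      have hnn' : n = n' := uniqL hOgY hOn hgYn hOn' hgYn'
      apply Subtype.ext
      have h1 : n' ≠ m := fun h => hOm (h ▸ hOn')
      exact uniqP h1 (hnn' ▸ hfgYn) (f _).2 hYn' Y.2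
  | elem hf =>
    obtain ⟨hU, hspec⟩ := hf
    rename_i U l f
    refine ⟨elemInvMap U l hU, elemInvMap_isProj U l hU, ?_, ?_⟩
    · intro k
      apply Subtype.ext
      have hUfk : U ≠ ((f k : P)) := fun h => hU (h ▸ (f k).2)
      exact elemInvMap_eq U l hU k.2 (hspec k)
    · intro X
      apply Subtype.ext
      have h1 : (elemInvMap U l hU X : L) ≠ l := fun h => hU (h ▸ (elemInvMap U l hU X).2)
      exact uniqP h1 (hspec _) (f _).2 (elemInvMap_mem U l hU X) X.2
  | elemInv hf =>
    obtain ⟨hU, hspec⟩ := hf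
    rename_i U l f
    refine ⟨elemMap U l hU, elemMap_isProj U l hU, ?_, ?_⟩
    · intro X
      apply Subtype.ext
      exact elemMap_eq U l hU (hspec X) X.2
    · intro k
      apply Subtype.ext
      have hUX : U ≠ ((elemMap U l hU k : P)) := fun h => hU (h ▸ (elemMap U l hU k).2)
      exact uniqL hUX (f _).2 (hspec _) k.2 (elemMap_mem U l hU k)
  | comp hf hg ihf ihg =>
    obtain ⟨f', hf', hf'1, hf'2⟩ := ihf
    obtain ⟨g', hg', hg'1, hg'2⟩ := ihg
    refine ⟨f' ∘ g', IsProj.comp hg' hf', fun x => ?_, fun y => ?_⟩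
    · simp only [Function.comp_apply]
      rw [hg'1, hf'1]
    · simp only [Function.comp_apply]
      rw [hf'2, hg'2]

/-- Two projectivities agreeing on three distinct elements agree everywhere. -/
lemma proj_ext3 (hT : AxiomT P L) {a b : Obj P L} {f g : a.Carrier → b.Carrier}
    (hf : IsProj P L a b f) (hg : IsProj P L a b g) {x y z : a.Carrier}
    (hxy : x ≠ y) (hxz : x ≠ z) (hyz : y ≠ z)
    (h1 : f x = g x) (h2 : f y = g y) (h3 : f z = g z) : ∀ w, f w = g w := by
  obtain ⟨g', hg', hgl, hgr⟩ := exists_inverse hg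
  have hcomp : IsProj P L a a (g' ∘ f) := IsProj.comp hf hg'
  have hfix : ∀ w, (g' ∘ f) w = w := by
    apply hT a _ hcomp
    refine ⟨x, y, z, hxy, hxz, hyz, ?_, ?_, ?_⟩
    · show g' (f x) = x; rw [h1, hgl]
    · show g' (f y) = y; rw [h2, hgl]
    · show g' (f z) = z; rw [h3, hgl]
  intro w
  have := hfix w
  have h4 : g ((g' ∘ f) w) = g w := by rw [this]
  rwa [Function.comp_apply, hgr] at h4

lemma proj_injective {a b : Obj P L} {f : a.Carrier → b.Carrier}
    (hf : IsProj P L a b f) : Function.Injective f := by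
  obtain ⟨g, _, hgl, _⟩ := exists_inverse hf
  intro x y h
  rw [← hgl x, ← hgl y, h]

/-- On any line there are two distinct points different from a given point. -/
lemma exists_two (h6 : LinesHaveAtLeast P L 6) (l : L) (E : P) :
    ∃ X Y : P, X ∈ l ∧ Y ∈ l ∧ X ≠ Y ∧ X ≠ E ∧ Y ≠ E := by
  classical
  obtain ⟨s, hcard, hmem⟩ := h6 l
  have h5 : 5 ≤ (s.erase E).card := by
    have := Finset.pred_card_le_card_erase (a := E) (s := s)
    omega
  have hX : ∃ X, X ∈ s.erase E := Finset.card_pos.mp (by omega) |>.exists_mem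
  obtain ⟨X, hX⟩ := hX
  have h4 : 4 ≤ ((s.erase E).erase X).card := by
    have := Finset.pred_card_le_card_erase (a := X) (s := s.erase E)
    omega
  obtain ⟨Y, hY⟩ := Finset.card_pos.mp (by omega : 0 < ((s.erase E).erase X).card) |>.exists_mem
  refine ⟨X, Y, hmem X (Finset.mem_of_mem_erase hX), hmem Y (Finset.mem_of_mem_erase (Finset.mem_of_mem_erase hY)), ?_, ?_, ?_⟩
  · exact fun h => (Finset.ne_of_mem_erase hY) h.symm
  · exact Finset.ne_of_mem_erase hX
  · exact Finset.ne_of_mem_erase (Finset.mem_of_mem_erase hY)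

/-- On any line there is a point different from two given points. -/
lemma exists_third (h6 : LinesHaveAtLeast P L 6) (l : L) (A B : P) :
    ∃ X : P, X ∈ l ∧ X ≠ A ∧ X ≠ B := by
  obtain ⟨X, Y, hX, hY, hXY, hXA, hYA⟩ := exists_two h6 l A
  by_cases h : X = B
  · exact ⟨Y, hY, hYA, fun hc => hXY (h ▸ hc ▸ rfl)⟩
  · exact ⟨X, hX, hXA, h⟩

end FPC

namespace FPC

open Configuration

variable {P L : Type u} [Membership P L] [Configuration.ProjectivePlane P L]

/-- A projectivity between distinct ranges fixing their common point is a perspectivity. -/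
lemma persp_of_fix_common (hT : AxiomT P L) (h6 : LinesHaveAtLeast P L 6)
    {l m : L} (hlm : l ≠ m) {f : {X : P // X ∈ l} → {Y : P // Y ∈ m}}
    (hf : IsProj P L (.range l) (.range m) f)
    {E : P} (hEl : E ∈ l) (hEm : E ∈ m) (hfix : (f ⟨E, hEl⟩ : P) = E) :
    ∃ O : P, O ∉ l ∧ O ∉ m ∧
      ∀ X : {X : P // X ∈ l}, ∃ n : L, O ∈ n ∧ (X : P) ∈ n ∧ (f X : P) ∈ n := by
  have hinj := proj_injective hf
  obtain ⟨X, Y, hXl, hYl, hXY, hXE, hYE⟩ := exists_two h6 l E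
  have himg : ∀ (Z : P) (hZl : Z ∈ l), Z ≠ E → (f ⟨Z, hZl⟩ : P) ∉ l := by
    intro Z hZl hZE hc
    have h1 : (f ⟨Z, hZl⟩ : P) = E := uniqP hlm hc (f _).2 hEl hEm
    have h2 : f ⟨Z, hZl⟩ = f ⟨E, hEl⟩ := Subtype.ext (h1.trans hfix.symm)
    exact hZE (congrArg Subtype.val (hinj h2))
  have hfXl := himg X hXl hXE
  have hfYl := himg Y hYl hYE
  have hXfX : X ≠ (f ⟨X, hXl⟩ : P) := fun h => hfXl (h ▸ hXl)
  have hYfY : Y ≠ (f ⟨Y, hYl⟩ : P) := fun h => hfYl (h ▸ hYl)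
  have hlXl : (ln hXfX : L) ≠ l := by
    intro h
    have h2 : (f ⟨X, hXl⟩ : P) ∈ (ln hXfX : L) := ln_right hXfX
    rw [h] at h2
    exact hfXl h2
  have hlYl : (ln hYfY : L) ≠ l := by
    intro h
    have h2 : (f ⟨Y, hYl⟩ : P) ∈ (ln hYfY : L) := ln_right hYfY
    rw [h] at h2
    exact hfYl h2
  have hfXfY : f ⟨X, hXl⟩ ≠ f ⟨Y, hYl⟩ := fun h => hXY (congrArg Subtype.val (hinj h))
  have hXm : X ∉ m := fun hc => hXE (uniqP hlm hXl hc hEl hEm)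
  have hYm : Y ∉ m := fun hc => hYE (uniqP hlm hYl hc hEl hEm)
  have hlXm : (ln hXfX : L) ≠ m := by
    intro h
    have h2 : X ∈ (ln hXfX : L) := ln_left hXfX
    rw [h] at h2
    exact hXm h2
  have hlYm : (ln hYfY : L) ≠ m := by
    intro h
    have h2 : Y ∈ (ln hYfY : L) := ln_left hYfY
    rw [h] at h2
    exact hYm h2
  have hlXlY : (ln hXfX : L) ≠ (ln hYfY : L) := by
    intro h
    have hY' : Y ∈ (ln hXfX : L) := by rw [h]; exact ln_left hYfY
    have h2 : (ln hXfX : L) = l := uniqL hXY (ln_left hXfX) hY' hXl hYl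
    exact hlXl h2
  have hOlX : (pt hlXlY : P) ∈ (ln hXfX : L) := pt_left _
  have hOlY : (pt hlXlY : P) ∈ (ln hYfY : L) := pt_right _
  have hOl : (pt hlXlY : P) ∉ l := by
    intro hc
    have h1 : (pt hlXlY : P) = X := uniqP hlXl hOlX hc (ln_left hXfX) hXl
    have h2 : (pt hlXlY : P) = Y := uniqP hlYl hOlY hc (ln_left hYfY) hYl
    exact hXY (h1 ▸ h2)
  have hOm : (pt hlXlY : P) ∉ m := by
    intro hc
    have h1 : (pt hlXlY : P) = (f ⟨X, hXl⟩ : P) :=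
      uniqP hlXm hOlX hc (ln_right hXfX) (f _).2
    have h2 : (pt hlXlY : P) = (f ⟨Y, hYl⟩ : P) :=
      uniqP hlYm hOlY hc (ln_right hYfY) (f _).2
    exact hfXfY (Subtype.ext (h1 ▸ h2))
  have hOE : (pt hlXlY : P) ≠ E := fun h => hOl (h ▸ hEl)
  have hagree : ∀ W, f W = perspMap (pt hlXlY) l m hOl hOm W := by
    have e1 : f ⟨X, hXl⟩ = perspMap (pt hlXlY) l m hOl hOm ⟨X, hXl⟩ := by
      apply Subtype.ext
      exact (perspMap_eq _ l m hOl hOm hOlX (ln_left hXfX) (ln_right hXfX) (f _).2).symm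
    have e2 : f ⟨Y, hYl⟩ = perspMap (pt hlXlY) l m hOl hOm ⟨Y, hYl⟩ := by
      apply Subtype.ext
      exact (perspMap_eq _ l m hOl hOm hOlY (ln_left hYfY) (ln_right hYfY) (f _).2).symm
    have e3 : f ⟨E, hEl⟩ = perspMap (pt hlXlY) l m hOl hOm ⟨E, hEl⟩ := by
      apply Subtype.ext
      rw [hfix]
      exact (perspMap_eq _ l m hOl hOm (ln_left hOE) (ln_right hOE) (ln_right hOE) hEm).symm
    exact proj_ext3 hT hf (perspMap_isProj _ l m hOl hOm)
      (fun h => hXY (congrArg Subtype.val h)) (fun h => hXE (congrArg Subtype.val h))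
      (fun h => hYE (congrArg Subtype.val h)) e1 e2 e3
  refine ⟨pt hlXlY, hOl, hOm, fun W => ?_⟩
  obtain ⟨n, hOn, hWn, hgWn⟩ := perspMap_spec (pt hlXlY) l m hOl hOm W
  refine ⟨n, hOn, hWn, ?_⟩
  rw [hagree W]
  exact hgWn

end FPC

namespace FPC

open Configuration

variable {P L : Type u} [Membership P L] [Configuration.ProjectivePlane P L]

/-- The fundamental projectivity of `e` determined by a complete
quadrangle `p q X B` with diagonal points `U`, `V` on `e`, whose remaining sides
meet `e` at `z` and `r`. -/
lemma quad_omega {U V : P} {e : L} (hUe : U ∈ e) (hVe : V ∈ e)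
    {z r p q X B : P} {n₁ n₂ m₁ m₂ s t : L}
    (hz : z ∈ e) (hr : r ∈ e)
    (hpn₁ : p ∈ n₁) (hXn₁ : X ∈ n₁) (hUn₁ : U ∈ n₁)
    (hqn₂ : q ∈ n₂) (hBn₂ : B ∈ n₂) (hUn₂ : U ∈ n₂)
    (hpm₁ : p ∈ m₁) (hBm₁ : B ∈ m₁) (hVm₁ : V ∈ m₁)
    (hqm₂ : q ∈ m₂) (hXm₂ : X ∈ m₂) (hVm₂ : V ∈ m₂)
    (hps : p ∈ s) (hqs : q ∈ s) (hzs : z ∈ s)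
    (hXt : X ∈ t) (hBt : B ∈ t) (hrt : r ∈ t)
    (hXe : X ∉ e) (hBe : B ∉ e) (hXs : X ∉ s) (hBs : B ∉ s) :
    ∃ ω : {W : P // W ∈ e} → {W : P // W ∈ e},
      IsProj P L (.range e) (.range e) ω ∧
      (ω ⟨U, hUe⟩ : P) = V ∧ (ω ⟨V, hVe⟩ : P) = U ∧
      (ω ⟨z, hz⟩ : P) = z ∧ (ω ⟨r, hr⟩ : P) = r ∧
      ∀ w : {W : P // W ∈ e}, ∃ (yP : P) (nw nw' : L), yP ∈ s ∧
        X ∈ nw ∧ (w : P) ∈ nw ∧ yP ∈ nw ∧ B ∈ nw' ∧ yP ∈ nw' ∧ (ω w : P) ∈ nw' := by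
  refine ⟨fun w => perspMap B s e hBs hBe (perspMap X e s hXe hXs w),
    IsProj.comp (perspMap_isProj X e s hXe hXs) (perspMap_isProj B s e hBs hBe),
    ?_, ?_, ?_, ?_, ?_⟩
  · have h1 : (perspMap X e s hXe hXs ⟨U, hUe⟩ : P) = p :=
      perspMap_eq X e s hXe hXs hXn₁ hUn₁ hpn₁ hps
    have h2 : (perspMap X e s hXe hXs ⟨U, hUe⟩ : P) ∈ m₁ := by rw [h1]; exact hpm₁
    exact perspMap_eq B s e hBs hBe hBm₁ h2 hVm₁ hVe
  · have h1 : (perspMap X e s hXe hXs ⟨V, hVe⟩ : P) = q :=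
      perspMap_eq X e s hXe hXs hXm₂ hVm₂ hqm₂ hqs
    have h2 : (perspMap X e s hXe hXs ⟨V, hVe⟩ : P) ∈ n₂ := by rw [h1]; exact hqn₂
    exact perspMap_eq B s e hBs hBe hBn₂ h2 hUn₂ hUe
  · have hXz : X ≠ z := fun h => hXe (h ▸ hz)
    have h1 : (perspMap X e s hXe hXs ⟨z, hz⟩ : P) = z :=
      perspMap_eq X e s hXe hXs (ln_left hXz) (ln_right hXz) (ln_right hXz) hzs
    have hBz : B ≠ z := fun h => hBe (h ▸ hz)
    have h2 : (perspMap X e s hXe hXs ⟨z, hz⟩ : P) ∈ (ln hBz : L) := by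
      rw [h1]; exact ln_right hBz
    exact perspMap_eq B s e hBs hBe (ln_left hBz) h2 (ln_right hBz) hz
  · have h1 : (perspMap X e s hXe hXs ⟨r, hr⟩ : P) ∈ t :=
      perspMap_collinear X e s hXe hXs ⟨r, hr⟩ hXt hrt
    exact perspMap_eq B s e hBs hBe hBt h1 hrt hr
  · intro w
    have hXw : X ≠ (w : P) := fun h => hXe (h ▸ w.2)
    have hBy : B ≠ (perspMap X e s hXe hXs w : P) := fun h =>
      hBs (h ▸ (perspMap X e s hXe hXs w).2)
    refine ⟨(perspMap X e s hXe hXs w : P), ln hXw, ln hBy,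
      (perspMap X e s hXe hXs w).2, ln_left hXw, ln_right hXw, ?_, ln_left hBy, ln_right hBy, ?_⟩
    · exact perspMap_collinear X e s hXe hXs w (ln_left hXw) (ln_right hXw)
    · exact perspMap_collinear B s e hBs hBe _ (ln_left hBy) (ln_right hBy)

end FPC

namespace FPC

open Configuration

variable {P L : Type u} [Membership P L] [Configuration.ProjectivePlane P L]

/-- Uniqueness of the fourth harmonic point: two complete quadrangles with
diagonal points `U`, `V` on `e` and a common side-point `z` determine the same
fourth point. -/
lemma quad_unique (hT : AxiomT P L) {U V z r r' : P} {e : L}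
    (hUV : U ≠ V) (hUe : U ∈ e) (hVe : V ∈ e)
    (hz : z ∈ e) (hzU : z ≠ U) (hzV : z ≠ V) (hr : r ∈ e) (hr' : r' ∈ e)
    {p q X B : P} {n₁ n₂ m₁ m₂ s t : L}
    (hpn₁ : p ∈ n₁) (hXn₁ : X ∈ n₁) (hUn₁ : U ∈ n₁)
    (hqn₂ : q ∈ n₂) (hBn₂ : B ∈ n₂) (hUn₂ : U ∈ n₂)
    (hpm₁ : p ∈ m₁) (hBm₁ : B ∈ m₁) (hVm₁ : V ∈ m₁)
    (hqm₂ : q ∈ m₂) (hXm₂ : X ∈ m₂) (hVm₂ : V ∈ m₂)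
    (hps : p ∈ s) (hqs : q ∈ s) (hzs : z ∈ s)
    (hXt : X ∈ t) (hBt : B ∈ t) (hrt : r ∈ t)
    (hpe : p ∉ e) (hXe : X ∉ e) (hBe : B ∉ e)
    (hXs : X ∉ s) (hBs : B ∉ s) (hXB : X ≠ B)
    {p' q' X' B' : P} {n₁' n₂' m₁' m₂' s' t' : L}
    (hpn₁' : p' ∈ n₁') (hXn₁' : X' ∈ n₁') (hUn₁' : U ∈ n₁')
    (hqn₂' : q' ∈ n₂') (hBn₂' : B' ∈ n₂') (hUn₂' : U ∈ n₂')
    (hpm₁' : p' ∈ m₁') (hBm₁' : B' ∈ m₁') (hVm₁' : V ∈ m₁')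
    (hqm₂' : q' ∈ m₂') (hXm₂' : X' ∈ m₂') (hVm₂' : V ∈ m₂')
    (hps' : p' ∈ s') (hqs' : q' ∈ s') (hzs' : z ∈ s')
    (hXt' : X' ∈ t') (hBt' : B' ∈ t') (hrt' : r' ∈ t')
    (hpe' : p' ∉ e) (hXe' : X' ∉ e) (hBe' : B' ∉ e)
    (hXs' : X' ∉ s') (hBs' : B' ∉ s') (hXB' : X' ≠ B') :
    r = r' := by
  obtain ⟨ω, hωP, hωU, hωV, hωz, hωr, hωspec⟩ :=
    quad_omega hUe hVe hz hr hpn₁ hXn₁ hUn₁ hqn₂ hBn₂ hUn₂ hpm₁ hBm₁ hVm₁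
      hqm₂ hXm₂ hVm₂ hps hqs hzs hXt hBt hrt hXe hBe hXs hBs
  obtain ⟨ω', hωP', hωU', hωV', hωz', hωr'', hωspec'⟩ :=
    quad_omega hUe hVe hz hr' hpn₁' hXn₁' hUn₁' hqn₂' hBn₂' hUn₂' hpm₁' hBm₁' hVm₁'
      hqm₂' hXm₂' hVm₂' hps' hqs' hzs' hXt' hBt' hrt' hXe' hBe' hXs' hBs'
  have hdUV : (⟨U, hUe⟩ : {W : P // W ∈ e}) ≠ ⟨V, hVe⟩ :=
    fun h => hUV (congrArg Subtype.val h)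
  have hdUz : (⟨U, hUe⟩ : {W : P // W ∈ e}) ≠ ⟨z, hz⟩ :=
    fun h => hzU (congrArg Subtype.val h).symm
  have hdVz : (⟨V, hVe⟩ : {W : P // W ∈ e}) ≠ ⟨z, hz⟩ :=
    fun h => hzV (congrArg Subtype.val h).symm
  have hse : s ≠ e := fun h => hpe (h ▸ hps)
  have hse' : s' ≠ e := fun h => hpe' (h ▸ hps')
  have hte : t ≠ e := fun h => hXe (h ▸ hXt)
  have hte' : t' ≠ e := fun h => hXe' (h ▸ hXt')
  -- ω ∘ ω' and ω' ∘ ω are the identity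
  have hid1 : ∀ w, (ω ∘ ω') w = w := by
    apply hT _ _ (IsProj.comp hωP' hωP)
    refine ⟨⟨U, hUe⟩, ⟨V, hVe⟩, ⟨z, hz⟩, hdUV, hdUz, hdVz, ?_, ?_, ?_⟩
    · show ω (ω' _) = _
      rw [show ω' ⟨U, hUe⟩ = ⟨V, hVe⟩ from Subtype.ext hωU']
      exact Subtype.ext hωV
    · show ω (ω' _) = _
      rw [show ω' ⟨V, hVe⟩ = ⟨U, hUe⟩ from Subtype.ext hωV']
      exact Subtype.ext hωU
    · show ω (ω' _) = _
      rw [show ω' ⟨z, hz⟩ = ⟨z, hz⟩ from Subtype.ext hωz']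
      exact Subtype.ext hωz
  have hid2 : ∀ w, (ω' ∘ ω) w = w := by
    apply hT _ _ (IsProj.comp hωP hωP')
    refine ⟨⟨U, hUe⟩, ⟨V, hVe⟩, ⟨z, hz⟩, hdUV, hdUz, hdVz, ?_, ?_, ?_⟩
    · show ω' (ω _) = _
      rw [show ω ⟨U, hUe⟩ = ⟨V, hVe⟩ from Subtype.ext hωU]
      exact Subtype.ext hωV'
    · show ω' (ω _) = _
      rw [show ω ⟨V, hVe⟩ = ⟨U, hUe⟩ from Subtype.ext hωV]
      exact Subtype.ext hωU'
    · show ω' (ω _) = _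
      rw [show ω ⟨z, hz⟩ = ⟨z, hz⟩ from Subtype.ext hωz]
      exact Subtype.ext hωz'
  -- hence ω' also fixes r, and ω fixes r'
  have hω'r : (ω' ⟨r, hr⟩ : P) = r := by
    have := hid2 ⟨r, hr⟩
    rw [Function.comp_apply, show ω ⟨r, hr⟩ = ⟨r, hr⟩ from Subtype.ext hωr] at this
    exact congrArg Subtype.val this
  have hωr' : (ω ⟨r', hr'⟩ : P) = r' := by
    have := hid1 ⟨r', hr'⟩
    rw [Function.comp_apply, show ω' ⟨r', hr'⟩ = ⟨r', hr'⟩ from Subtype.ext hωr''] at this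
    exact congrArg Subtype.val this
  -- main case analysis
  obtain ⟨yP, nw, nw', hyS, hXnw, hrnw, hynw, hBnw', hynw', hωnw'⟩ := hωspec' ⟨r, hr⟩
  rw [hω'r] at hωnw'
  by_cases hc : nw = nw'
  · have hnt : nw = t' := uniqL hXB' hXnw (hc ▸ hBnw') hXt' hBt'
    exact uniqP hte' (hnt ▸ hrnw) hr (hnt ▸ hrt' : r' ∈ t') hr'
  · have hyr : yP = r := uniqP hc hynw hynw' hrnw hωnw'
    have hrz : r = z := uniqP hse' (hyr ▸ hyS) hr hzs' hz
    -- now the symmetric evaluation shows r' = z as well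
    obtain ⟨yQ, mw, mw', hyS2, hXmw, hr'mw, hymw, hBmw', hymw', hωmw'⟩ := hωspec ⟨r', hr'⟩
    rw [hωr'] at hωmw'
    by_cases hc2 : mw = mw'
    · have hmt : mw = t := uniqL hXB hXmw (hc2 ▸ hBmw') hXt hBt
      exact (uniqP hte (hmt ▸ hr'mw) hr' (hmt ▸ hrt : r ∈ t) hr).symm
    · have hyr2 : yQ = r' := uniqP hc2 hymw hymw' hr'mw hωmw'
      have : r' = z := uniqP hse (hyr2 ▸ hyS2) hr' hzs hz
      rw [hrz, this]

end FPC

namespace FPC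

open Configuration

variable {P L : Type u} [Membership P L] [Configuration.ProjectivePlane P L]

/-- The harmonic-conjugate machine: a fixed projectivity `H` of the range of `e`
fixing `U` and `V`, such that for every `z` on `e` other than `U`, `V`, the pair
`(z, H z)` is realized by a complete quadrangle with diagonal points `U`, `V`. -/
lemma machine (h6 : LinesHaveAtLeast P L 6) {U V : P} {e : L}
    (hUV : U ≠ V) (hUe : U ∈ e) (hVe : V ∈ e) :
    ∃ H : {W : P // W ∈ e} → {W : P // W ∈ e},
      IsProj P L (.range e) (.range e) H ∧
      (H ⟨U, hUe⟩ : P) = U ∧ (H ⟨V, hVe⟩ : P) = V ∧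
      ∀ (z : P) (hz : z ∈ e), z ≠ U → z ≠ V →
        ∃ (p q X B : P) (n₁ n₂ m₁ m₂ s t : L),
          p ∈ n₁ ∧ X ∈ n₁ ∧ U ∈ n₁ ∧ q ∈ n₂ ∧ B ∈ n₂ ∧ U ∈ n₂ ∧
          p ∈ m₁ ∧ B ∈ m₁ ∧ V ∈ m₁ ∧ q ∈ m₂ ∧ X ∈ m₂ ∧ V ∈ m₂ ∧
          p ∈ s ∧ q ∈ s ∧ z ∈ s ∧ X ∈ t ∧ B ∈ t ∧ (H ⟨z, hz⟩ : P) ∈ t ∧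
          p ∉ e ∧ X ∉ e ∧ B ∉ e ∧ X ∉ s ∧ B ∉ s ∧ X ≠ B := by
  obtain ⟨a, hae⟩ := Nondegenerate.exists_point (P := P) e
  have hUa : U ≠ a := fun h => hae (h ▸ hUe)
  obtain ⟨b, hbUa, hbU, hba⟩ := exists_third h6 (ln hUa : L) U a
  have hUUa : U ∈ (ln hUa : L) := ln_left hUa
  have haUa : a ∈ (ln hUa : L) := ln_right hUa
  have hUae : (ln hUa : L) ≠ e := fun h => hae (h ▸ haUa)
  have hbe : b ∉ e := fun hc => hbU (uniqP hUae hbUa hc hUUa hUe)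
  have hVa : V ≠ a := fun h => hae (h ▸ hVe)
  have hVb : V ≠ b := fun h => hbe (h ▸ hVe)
  have hVUa : V ∉ (ln hUa : L) := by
    intro hc
    exact hae ((uniqL hUV hUUa hc hUe hVe) ▸ haUa)
  have hUVa : U ∉ (ln hVa : L) := by
    intro hc
    exact hae ((uniqL hUV hc (ln_left hVa) hUe hVe) ▸ ln_right hVa)
  have hUVb : U ∉ (ln hVb : L) := by
    intro hc
    exact hbe ((uniqL hUV hc (ln_left hVb) hUe hVe) ▸ ln_right hVb)
  have hUaVa : (ln hUa : L) ≠ (ln hVa : L) := by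
    intro h
    apply hVUa
    rw [h]
    exact ln_left hVa
  have hbVa : b ∉ (ln hVa : L) := fun hc =>
    hba (uniqP hUaVa hbUa hc haUa (ln_right hVa))
  have haVb : a ∉ (ln hVb : L) := by
    intro hc
    have h1 : (ln hVb : L) = (ln hUa : L) :=
      uniqL (fun h => hba h.symm) hc (ln_right hVb) haUa hbUa
    exact hVUa (h1 ▸ ln_left hVb)
  have hVaE : (ln hVa : L) ≠ e := fun h => hae (h ▸ ln_right hVa)
  have hVbE : (ln hVb : L) ≠ e := fun h => hbe (h ▸ ln_right hVb)
  refine ⟨fun w => perspMap a (ln hVb) e haVb hae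
      (perspMap U (ln hVa) (ln hVb) hUVa hUVb
        (perspMap b e (ln hVa) hbe hbVa w)), ?_, ?_, ?_, ?_⟩
  · exact IsProj.comp (IsProj.comp (perspMap_isProj b e (ln hVa) hbe hbVa)
      (perspMap_isProj U (ln hVa) (ln hVb) hUVa hUVb))
      (perspMap_isProj a (ln hVb) e haVb hae)
  · -- H fixes U
    have h1 : (perspMap b e (ln hVa) hbe hbVa ⟨U, hUe⟩ : P) = a :=
      perspMap_eq b e (ln hVa) hbe hbVa hbUa hUUa haUa (ln_right hVa)
    have h1' : (perspMap b e (ln hVa) hbe hbVa ⟨U, hUe⟩ : P) ∈ (ln hUa : L) := by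
      rw [h1]; exact haUa
    have h2 : (perspMap U (ln hVa) (ln hVb) hUVa hUVb
        (perspMap b e (ln hVa) hbe hbVa ⟨U, hUe⟩) : P) = b :=
      perspMap_eq U (ln hVa) (ln hVb) hUVa hUVb hUUa h1' hbUa (ln_right hVb)
    have h2' : (perspMap U (ln hVa) (ln hVb) hUVa hUVb
        (perspMap b e (ln hVa) hbe hbVa ⟨U, hUe⟩) : P) ∈ (ln hUa : L) := by
      rw [h2]; exact hbUa
    exact perspMap_eq a (ln hVb) e haVb hae haUa h2' hUUa hUe
  · -- H fixes V
    have h1 : (perspMap b e (ln hVa) hbe hbVa ⟨V, hVe⟩ : P) = V :=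
      perspMap_eq b e (ln hVa) hbe hbVa (ln_right hVb) (ln_left hVb)
        (ln_left hVb) (ln_left hVa)
    have h1' : (perspMap b e (ln hVa) hbe hbVa ⟨V, hVe⟩ : P) ∈ e := by
      rw [h1]; exact hVe
    have h2 : (perspMap U (ln hVa) (ln hVb) hUVa hUVb
        (perspMap b e (ln hVa) hbe hbVa ⟨V, hVe⟩) : P) = V :=
      perspMap_eq U (ln hVa) (ln hVb) hUVa hUVb hUe h1' hVe (ln_left hVb)
    have h2' : (perspMap U (ln hVa) (ln hVb) hUVa hUVb
        (perspMap b e (ln hVa) hbe hbVa ⟨V, hVe⟩) : P) ∈ (ln hVa : L) := by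
      rw [h2]; exact ln_left hVa
    exact perspMap_eq a (ln hVb) e haVb hae (ln_right hVa) h2' (ln_left hVa) hVe
  · -- the quadrangle realizing (z, H z)
    intro z hz hzU hzV
    have hbz : b ≠ z := fun h => hbe (h ▸ hz)
    set c := perspMap b e (ln hVa) hbe hbVa ⟨z, hz⟩ with hc
    have hcVa : (c : P) ∈ (ln hVa : L) := c.2
    have hcs : (c : P) ∈ (ln hbz : L) :=
      perspMap_collinear b e (ln hVa) hbe hbVa ⟨z, hz⟩ (ln_left hbz) (ln_right hbz)
    have hcV : (c : P) ≠ V := by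
      intro hcv
      have hVs : V ∈ (ln hbz : L) := hcv ▸ hcs
      have h1 : (ln hbz : L) = (ln hVb : L) :=
        uniqL hVb.symm (ln_left hbz) hVs (ln_right hVb) (ln_left hVb)
      have hzVb : z ∈ (ln hVb : L) := h1 ▸ ln_right hbz
      exact hzV (uniqP hVbE hzVb hz (ln_left hVb) hVe)
    have hce : (c : P) ∉ e := fun hcE => hcV (uniqP hVaE hcVa hcE (ln_left hVa) hVe)
    have hUc : U ≠ (c : P) := fun h => hUVa (h ▸ hcVa)
    set d := perspMap U (ln hVa) (ln hVb) hUVa hUVb c with hd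
    have hdVb : (d : P) ∈ (ln hVb : L) := d.2
    have hdUc : (d : P) ∈ (ln hUc : L) :=
      perspMap_collinear U (ln hVa) (ln hVb) hUVa hUVb c (ln_left hUc) (ln_right hUc)
    have hdV : (d : P) ≠ V := by
      intro hdv
      have hVUc : V ∈ (ln hUc : L) := by
        have h0 := hdUc
        rw [hdv] at h0
        exact h0
      have h1 : (ln hUc : L) = e := uniqL hUV (ln_left hUc) hVUc hUe hVe
      apply hce
      rw [← h1]
      exact ln_right hUc
    have hde : (d : P) ∉ e := fun hdE => hdV (uniqP hVbE hdVb hdE (ln_left hVb) hVe)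
    have had : a ≠ (d : P) := fun h => haVb (h ▸ hdVb)
    have haS : a ∉ (ln hbz : L) := by
      intro hc2
      have h1 : (ln hbz : L) = (ln hUa : L) := uniqL hba.symm hc2 (ln_left hbz) haUa hbUa
      have hzUa : z ∈ (ln hUa : L) := h1 ▸ ln_right hbz
      exact hzU (uniqP hUae hzUa hz hUUa hUe)
    have hdS : (d : P) ∉ (ln hbz : L) := by
      intro hc2
      by_cases h1 : (ln hbz : L) = (ln hVb : L)
      · have hzVb : z ∈ (ln hVb : L) := h1 ▸ ln_right hbz
        exact hzV (uniqP hVbE hzVb hz (ln_left hVb) hVe)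
      · have hdb : (d : P) = b := uniqP h1 hc2 hdVb (ln_left hbz) (ln_right hVb)
        have hbUc : b ∈ (ln hUc : L) := hdb ▸ hdUc
        have h2 : (ln hUc : L) = (ln hUa : L) :=
          uniqL hbU.symm (ln_left hUc) hbUc hUUa hbUa
        have hcUa : (c : P) ∈ (ln hUa : L) := h2 ▸ ln_right hUc
        have hca : (c : P) = a := uniqP hUaVa hcUa hcVa haUa (ln_right hVa)
        exact haS (hca ▸ hcs)
    refine ⟨b, (c : P), a, (d : P), ln hUa, ln hUc, ln hVb, ln hVa, ln hbz, ln had,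
      hbUa, haUa, hUUa, ln_right hUc, hdUc, ln_left hUc,
      ln_right hVb, hdVb, ln_left hVb, hcVa, ln_right hVa, ln_left hVa,
      ln_left hbz, hcs, ln_right hbz, ln_left had, ln_right had, ?_,
      hbe, hae, hde, haS, hdS, had⟩
    exact perspMap_collinear a (ln hVb) e haVb hae d (ln_left had) (ln_right had)

end FPC

namespace FPC

open Configuration

variable {P L : Type u} [Membership P L] [Configuration.ProjectivePlane P L]

/-- A point of the conic other than the base points joins to the base points by
`π`-related lines. -/
lemma conic_mem_char {U V : P} {π : {k : L // U ∈ k} → {k : L // V ∈ k}}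
    {X : P} (hX : X ∈ conicSet P L U V π) (hUX : U ≠ X) (hVX : V ≠ X) :
    π ⟨ln hUX, ln_left hUX⟩ = ⟨ln hVX, ln_left hVX⟩ := by
  obtain ⟨k, hXk, hXπk⟩ := hX
  have h1 : (k : L) = ln hUX := uniqL hUX k.2 hXk (ln_left hUX) (ln_right hUX)
  have h2 : (⟨ln hUX, ln_left hUX⟩ : {k : L // U ∈ k}) = k := Subtype.ext h1.symm
  rw [h2]
  exact Subtype.ext (uniqL hVX (π k).2 hXπk (ln_left hVX) (ln_right hVX))

end FPC

namespace FPC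

open Configuration

variable {P L : Type u} [Membership P L] [Configuration.ProjectivePlane P L]

/-- **Base change for Steiner conics**: the second base point of a conic can be
replaced by any other point of the conic. -/
lemma baseChange (hT : AxiomT P L) (h6 : LinesHaveAtLeast P L 6)
    {U V B : P} {π : {k : L // U ∈ k} → {k : L // V ∈ k}}
    (hUV : U ≠ V)
    (hπ : IsProj P L (.pencil U) (.pencil V) π)
    (hnp : ∀ k, (π k : L) ≠ (k : L))
    (hB : B ∈ conicSet P L U V π) (hBU : B ≠ U) (hBV : B ≠ V) :
    ∃ ρ : {k : L // U ∈ k} → {k : L // B ∈ k},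
      IsProj P L (.pencil U) (.pencil B) ρ ∧ (∀ k, (ρ k : L) ≠ (k : L)) ∧
      conicSet P L U B ρ = conicSet P L U V π := by
  obtain ⟨πi, hπiP, hπil, hπir⟩ := exists_inverse hπ
  have hπinj : ∀ k k', π k = π k' → k = k' := by
    intro k k' h
    have := congrArg πi h
    rwa [hπil, hπil] at this
  have hUe : U ∈ (ln hUV : L) := ln_left hUV
  have hVe : V ∈ (ln hUV : L) := ln_right hUV
  -- the tangents at U and V and their intersection O
  obtain ⟨kv, hkv⟩ : ∃ kv, kv = π ⟨ln hUV, hUe⟩ := ⟨_, rfl⟩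
  obtain ⟨ku, hku⟩ : ∃ ku, ku = πi ⟨ln hUV, hVe⟩ := ⟨_, rfl⟩
  have hVkv : V ∈ (kv : L) := kv.2
  have hUku : U ∈ (ku : L) := ku.2
  have hπku : π ku = ⟨ln hUV, hVe⟩ := by rw [hku]; exact hπir _
  have hkve : (kv : L) ≠ (ln hUV : L) := by rw [hkv]; exact hnp _
  have hkue : (ku : L) ≠ (ln hUV : L) := by
    intro h
    have h2 : ku = ⟨ln hUV, hUe⟩ := Subtype.ext h
    have h3 : π ⟨ln hUV, hUe⟩ = ⟨ln hUV, hVe⟩ := h2 ▸ hπku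
    exact hkve (by rw [hkv, h3])
  have hUkv : U ∉ (kv : L) := fun h => hkve (uniqL hUV h hVkv hUe hVe)
  have hVku : V ∉ (ku : L) := fun h => hkue (uniqL hUV hUku h hUe hVe)
  have hkukv : (ku : L) ≠ (kv : L) := fun h => hVku (h ▸ hVkv)
  have hOku : (pt hkukv : P) ∈ (ku : L) := pt_left _
  have hOkv : (pt hkukv : P) ∈ (kv : L) := pt_right _
  have hOU : (pt hkukv : P) ≠ U := fun h => hUkv (h ▸ hOkv)
  have hOV : (pt hkukv : P) ≠ V := fun h => hVku (h ▸ hOku)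
  have hOe : (pt hkukv : P) ∉ (ln hUV : L) := by
    intro h
    exact hOU (uniqP hkue hOku h hUku hUe)
  -- facts about B
  have hUB : U ≠ B := hBU.symm
  have hVB : V ≠ B := hBV.symm
  have hBe : B ∉ (ln hUV : L) := by
    intro h
    obtain ⟨k₀, hBk₀, hBπk₀⟩ := hB
    have h1 : (k₀ : L) = ln hUV := uniqL hUB k₀.2 hBk₀ hUe h
    have h2 : k₀ = ⟨ln hUV, hUe⟩ := Subtype.ext h1
    have h3 : B ∈ (kv : L) := by rw [hkv, ← h2]; exact hBπk₀
    exact hBV (uniqP hkve h3 h hVkv hVe)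
  have hπUB : π ⟨ln hUB, ln_left hUB⟩ = ⟨ln hVB, ln_left hVB⟩ :=
    conic_mem_char hB hUB hVB
  have hUlnVB : U ∉ (ln hVB : L) := by
    intro h
    exact hBe (uniqL hUV h (ln_left hVB) hUe hVe ▸ ln_right hVB)
  have hVlnUB : V ∉ (ln hUB : L) := by
    intro h
    exact hBe ((uniqL hUV (ln_left hUB) h hUe hVe) ▸ ln_right hUB)
  have hBku : B ∉ (ku : L) := by
    intro h
    have h1 : (ku : L) = ln hUB := uniqL hUB hUku h (ln_left hUB) (ln_right hUB)
    have h2 : ku = ⟨ln hUB, ln_left hUB⟩ := Subtype.ext h1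
    have h3 : (⟨ln hUV, hVe⟩ : {k : L // V ∈ k}) = ⟨ln hVB, ln_left hVB⟩ := by
      rw [← hπku, h2, hπUB]
    have h4 : (ln hUV : L) = ln hVB := congrArg Subtype.val h3
    exact hBe (h4 ▸ ln_right hVB)
  have hBkv : B ∉ (kv : L) := by
    intro h
    have h1 : (kv : L) = ln hVB := uniqL hVB hVkv h (ln_left hVB) (ln_right hVB)
    have h2 : π ⟨ln hUV, hUe⟩ = π ⟨ln hUB, ln_left hUB⟩ := by
      rw [← hkv, hπUB]
      exact Subtype.ext h1
    have h3 := hπinj _ _ h2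
    have h4 : (ln hUV : L) = ln hUB := congrArg Subtype.val h3
    exact hBe (h4 ▸ ln_right hUB)
  have hOlnVB : (pt hkukv : P) ∉ (ln hVB : L) := by
    intro h
    have h1 : (kv : L) ≠ (ln hVB : L) := fun hc => hBkv (hc ▸ ln_right hVB)
    exact hOV (uniqP h1 hOkv h hVkv (ln_left hVB))
  have hOlnUB : (pt hkukv : P) ∉ (ln hUB : L) := by
    intro h
    have h1 : (ku : L) ≠ (ln hUB : L) := fun hc => hBku (hc ▸ ln_right hUB)
    exact hOU (uniqP h1 hOku h hUku (ln_left hUB))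
  have hOB : (pt hkukv : P) ≠ B := fun h => hBku (h ▸ hOku)
  -- the harmonic machine on e = ln hUV
  obtain ⟨H, hHP, hHU, hHV, hHq⟩ := machine h6 hUV hUe hVe
  obtain ⟨Hi, _, hHil, hHir⟩ := exists_inverse hHP
  have hHUeq : H ⟨U, hUe⟩ = ⟨U, hUe⟩ := Subtype.ext hHU
  have hHVeq : H ⟨V, hVe⟩ = ⟨V, hVe⟩ := Subtype.ext hHV
  -- the base-change projectivity ρ
  obtain ⟨ρ, hρdef⟩ : ∃ ρ : {k : L // U ∈ k} → {k : L // B ∈ k},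
      ρ = fun k => elemInvMap B (ln hUV) hBe
        (H (perspMap (pt hkukv) (ln hVB) (ln hUV) hOlnVB hOe
          (elemMap U (ln hVB) hUlnVB k))) := ⟨_, rfl⟩
  have hρP : IsProj P L (.pencil U) (.pencil B) ρ := by
    rw [hρdef]
    exact IsProj.comp (IsProj.comp (IsProj.comp
      (elemMap_isProj U (ln hVB) hUlnVB)
      (perspMap_isProj (pt hkukv) (ln hVB) (ln hUV) hOlnVB hOe)) hHP)
      (elemInvMap_isProj B (ln hUV) hBe)
  have hρmem : ∀ k, (H (perspMap (pt hkukv) (ln hVB) (ln hUV) hOlnVB hOe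
      (elemMap U (ln hVB) hUlnVB k)) : P) ∈ (ρ k : L) := by
    intro k
    rw [hρdef]
    exact elemInvMap_mem B (ln hUV) hBe _
  have hKEY : ∀ k : {k : L // U ∈ k},
      ∃ W : P, W ∈ (k : L) ∧ W ∈ (π k : L) ∧ W ∈ (ρ k : L) := by
    intro k
    by_cases hk_e : (k : L) = ln hUV
    · -- the line UV : W = V
      have hkeq : k = ⟨ln hUV, hUe⟩ := Subtype.ext hk_e
      have hVk : V ∈ (k : L) := by rw [hk_e]; exact hVe
      have hVπk : V ∈ (π k : L) := (π k).2
      refine ⟨V, hVk, hVπk, ?_⟩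
      have h1 : (elemMap U (ln hVB) hUlnVB k : P) = V :=
        elemMap_eq U (ln hVB) hUlnVB hVk (ln_left hVB)
      have h1' : (elemMap U (ln hVB) hUlnVB k : P) ∈ (ln hOV : L) := by
        rw [h1]; exact ln_right hOV
      have h2 : (perspMap (pt hkukv) (ln hVB) (ln hUV) hOlnVB hOe
          (elemMap U (ln hVB) hUlnVB k) : P) = V :=
        perspMap_eq _ _ _ hOlnVB hOe (ln_left hOV) h1' (ln_right hOV) hVe
      have h3 : H (perspMap (pt hkukv) (ln hVB) (ln hUV) hOlnVB hOe
          (elemMap U (ln hVB) hUlnVB k)) = H ⟨V, hVe⟩ := by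
        congr 1
        exact Subtype.ext h2
      have h4 := hρmem k
      rw [h3, hHVeq] at h4
      exact h4
    · by_cases hk_u : (k : L) = (ku : L)
      · -- the tangent at U : W = U
        have hkeq : k = ku := Subtype.ext (by rw [hk_u])
        have hUπk : U ∈ (π k : L) := by
          rw [hkeq, hπku]
          exact hUe
        refine ⟨U, k.2, hUπk, ?_⟩
        have h1 : (elemMap U (ln hVB) hUlnVB k : P) ∈ (ku : L) := by
          rw [← hk_u]
          exact elemMap_mem U (ln hVB) hUlnVB k
        have h2 : (perspMap (pt hkukv) (ln hVB) (ln hUV) hOlnVB hOe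
            (elemMap U (ln hVB) hUlnVB k) : P) = U :=
          perspMap_eq _ _ _ hOlnVB hOe hOku h1 hUku hUe
        have h3 : H (perspMap (pt hkukv) (ln hVB) (ln hUV) hOlnVB hOe
            (elemMap U (ln hVB) hUlnVB k)) = H ⟨U, hUe⟩ := by
          congr 1
          exact Subtype.ext h2
        have h4 := hρmem k
        rw [h3, hHUeq] at h4
        exact h4
      · by_cases hk_b : (k : L) = ln hUB
        · -- the chord UB : W = B
          have hkeq : k = ⟨ln hUB, ln_left hUB⟩ := Subtype.ext hk_b
          have hBk : B ∈ (k : L) := by rw [hk_b]; exact ln_right hUB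
          have hBπk : B ∈ (π k : L) := by
            rw [hkeq, hπUB]
            exact ln_right hVB
          exact ⟨B, hBk, hBπk, (ρ k).2⟩
        · -- generic case
          have hVk : V ∉ (k : L) := fun h => hk_e (uniqL hUV k.2 h hUe hVe)
          have hUπk : U ∉ (π k : L) := by
            intro h
            have h1 : (π k : L) = ln hUV := uniqL hUV h (π k).2 hUe hVe
            have h2 : π k = ⟨ln hUV, hVe⟩ := Subtype.ext h1
            have h3 : k = ku := hπinj k ku (by rw [h2, hπku])
            exact hk_u (by rw [h3])
          have hBk : B ∉ (k : L) := fun h =>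
            hk_b (uniqL hUB k.2 h (ln_left hUB) (ln_right hUB))
          have hBπk : B ∉ (π k : L) := by
            intro h
            have h1 : (π k : L) = ln hVB := uniqL hVB (π k).2 h (ln_left hVB) (ln_right hVB)
            have h2 : k = ⟨ln hUB, ln_left hUB⟩ :=
              hπinj _ _ (by rw [hπUB]; exact Subtype.ext h1)
            exact hk_b (congrArg Subtype.val h2)
          have hkπk : (π k : L) ≠ (k : L) := hnp k
          have hXπk : (pt hkπk : P) ∈ (π k : L) := pt_left _
          have hXk : (pt hkπk : P) ∈ (k : L) := pt_right _
          have hXU : (pt hkπk : P) ≠ U := fun h => hUπk (h ▸ hXπk)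
          have hXV : (pt hkπk : P) ≠ V := fun h => hVk (h ▸ hXk)
          have hXB : (pt hkπk : P) ≠ B := fun h => hBk (h ▸ hXk)
          have hXe : (pt hkπk : P) ∉ (ln hUV : L) := fun h =>
            hXU (uniqP hk_e hXk h k.2 hUe)
          have hXlnVB : (pt hkπk : P) ∉ (ln hVB : L) := by
            intro h
            by_cases h1 : (ln hVB : L) = (π k : L)
            · have h2 : π k = ⟨ln hVB, ln_left hVB⟩ := Subtype.ext h1.symm
              have h3 : k = ⟨ln hUB, ln_left hUB⟩ := hπinj _ _ (by rw [h2, hπUB])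
              exact hk_b (congrArg Subtype.val h3)
            · exact hXV (uniqP h1 h hXπk (ln_left hVB) (π k).2)
          have hkVB : (k : L) ≠ ln hVB := fun h => hUlnVB (h ▸ k.2)
          set pP := (elemMap U (ln hVB) hUlnVB k : P) with hpP
          have hpk : pP ∈ (k : L) := elemMap_mem U (ln hVB) hUlnVB k
          have hpVB : pP ∈ (ln hVB : L) := (elemMap U (ln hVB) hUlnVB k).2
          have hlnUBπk : (ln hUB : L) ≠ (π k : L) := fun h => hUπk (h ▸ ln_left hUB)
          have hq1 : (pt hlnUBπk : P) ∈ (ln hUB : L) := pt_left _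
          have hq2 : (pt hlnUBπk : P) ∈ (π k : L) := pt_right _
          have hpV : pP ≠ V := fun h => hVk (h ▸ hpk)
          have hpB : pP ≠ B := fun h => hBk (h ▸ hpk)
          have hlnVBe : (ln hVB : L) ≠ ln hUV := fun h => hBe (h ▸ ln_right hVB)
          have hlnUBe : (ln hUB : L) ≠ ln hUV := fun h => hBe (h ▸ ln_right hUB)
          have hpe : pP ∉ (ln hUV : L) := fun h =>
            hpV (uniqP hlnVBe hpVB h (ln_left hVB) hVe)
          have hpX : pP ≠ pt hkπk := fun h => hXlnVB (h ▸ hpVB)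
          have hqU : (pt hlnUBπk : P) ≠ U := fun h => hUπk (h ▸ hq2)
          have hqB : (pt hlnUBπk : P) ≠ B := fun h => hBπk (h ▸ hq2)
          have hqe : (pt hlnUBπk : P) ∉ (ln hUV : L) := fun h =>
            hqU (uniqP hlnUBe hq1 h (ln_left hUB) hUe)
          have hlnUBlnVB : (ln hUB : L) ≠ ln hVB := fun h => hUlnVB (h ▸ ln_left hUB)
          have hpq : pP ≠ pt hlnUBπk := by
            intro h
            have h1 : pP ∈ (ln hUB : L) := by rw [h]; exact hq1
            exact hpB (uniqP hlnUBlnVB h1 hpVB (ln_right hUB) (ln_right hVB))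
          -- the cross-axis perspectivity
          have hψP : IsProj P L (.range (k : L)) (.range ((π k) : L))
              (fun w => elemMap U ((π k) : L) hUπk (πi (elemInvMap V (k : L) hVk w))) :=
            IsProj.comp (IsProj.comp (elemInvMap_isProj V (k : L) hVk) hπiP)
              (elemMap_isProj U _ hUπk)
          have hψfix : ((fun w => elemMap U ((π k) : L) hUπk
              (πi (elemInvMap V (k : L) hVk w))) ⟨pt hkπk, hXk⟩ : P) = pt hkπk := by
            have h1 : (elemInvMap V (k : L) hVk ⟨pt hkπk, hXk⟩ : L) = (π k : L) :=
              elemInvMap_eq V _ hVk (π k).2 hXπk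
            have h2 : elemInvMap V (k : L) hVk ⟨pt hkπk, hXk⟩ = π k := Subtype.ext h1
            show (elemMap U ((π k) : L) hUπk (πi (elemInvMap V (k : L) hVk ⟨pt hkπk, hXk⟩)) : P) = pt hkπk
            rw [h2, hπil]
            exact elemMap_eq U _ hUπk hXk hXπk
          obtain ⟨Ok, hOkk, hOkπk2, hOkspec⟩ :=
            persp_of_fix_common hT h6 (fun h => hkπk h.symm) hψP hXk hXπk hψfix
          -- Ok lies on the tangent kv
          have hk_kv : (k : L) ≠ (kv : L) := fun h => hVk (by rw [h]; exact hVkv)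
          have hpv_k : (pt hk_kv : P) ∈ (k : L) := pt_left _
          have hpv_kv : (pt hk_kv : P) ∈ (kv : L) := pt_right _
          have hpvV : (pt hk_kv : P) ≠ V := fun h => hVk (h ▸ hpv_k)
          have hψpv : ((fun w => elemMap U ((π k) : L) hUπk
              (πi (elemInvMap V (k : L) hVk w))) ⟨pt hk_kv, hpv_k⟩ : P) = V := by
            have h1 : (elemInvMap V (k : L) hVk ⟨pt hk_kv, hpv_k⟩ : L) = (kv : L) :=
              elemInvMap_eq V _ hVk hVkv hpv_kv
            have h2 : elemInvMap V (k : L) hVk ⟨pt hk_kv, hpv_k⟩ = kv := Subtype.ext h1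
            show (elemMap U ((π k) : L) hUπk (πi (elemInvMap V (k : L) hVk ⟨pt hk_kv, hpv_k⟩)) : P) = V
            rw [h2, hkv, hπil]
            exact elemMap_eq U _ hUπk hVe (π k).2
          obtain ⟨n1, hOkn1, hpvn1, hV1⟩ := hOkspec ⟨pt hk_kv, hpv_k⟩
          rw [hψpv] at hV1
          have hOk_kv : Ok ∈ (kv : L) := by
            have hn1 : n1 = (kv : L) := uniqL hpvV hpvn1 hV1 hpv_kv hVkv
            exact hn1 ▸ hOkn1
          -- Ok lies on the tangent ku
          have h1U : (elemInvMap V (k : L) hVk ⟨U, k.2⟩ : L) = (ln hUV : L) :=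
            elemInvMap_eq V _ hVk hVe hUe
          have h2U : elemInvMap V (k : L) hVk ⟨U, k.2⟩ = ⟨ln hUV, hVe⟩ := Subtype.ext h1U
          have h3U : elemMap U ((π k) : L) hUπk (πi (elemInvMap V (k : L) hVk ⟨U, k.2⟩))
              = elemMap U ((π k) : L) hUπk ku := by
            rw [h2U, ← hku]
          obtain ⟨n2, hOkn2, hUn2, hw2⟩ := hOkspec ⟨U, k.2⟩
          rw [h3U] at hw2
          have hwku : (elemMap U ((π k) : L) hUπk ku : P) ∈ (ku : L) :=
            elemMap_mem U _ hUπk ku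
          have hwπk : (elemMap U ((π k) : L) hUπk ku : P) ∈ (π k : L) :=
            (elemMap U ((π k) : L) hUπk ku).2
          have hwU : U ≠ (elemMap U ((π k) : L) hUπk ku : P) := fun h => hUπk (h ▸ hwπk)
          have hOk_ku : Ok ∈ (ku : L) := by
            have hn2 : n2 = (ku : L) := uniqL hwU hUn2 hw2 hUku hwku
            exact hn2 ▸ hOkn2
          have hOkO : Ok = pt hkukv := uniqP hkukv hOk_ku hOk_kv hOku hOkv
          -- the line s through O, p, q
          obtain ⟨s, hOks, hps, hqs0⟩ := hOkspec ⟨pP, hpk⟩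
          have hψp : ((fun w => elemMap U ((π k) : L) hUπk
              (πi (elemInvMap V (k : L) hVk w))) ⟨pP, hpk⟩ : P) = pt hlnUBπk := by
            have h1 : (elemInvMap V (k : L) hVk ⟨pP, hpk⟩ : L) = (ln hVB : L) :=
              elemInvMap_eq V _ hVk (ln_left hVB) hpVB
            have h2 : elemInvMap V (k : L) hVk ⟨pP, hpk⟩ = ⟨ln hVB, ln_left hVB⟩ :=
              Subtype.ext h1
            have h3 : πi ⟨ln hVB, ln_left hVB⟩ = ⟨ln hUB, ln_left hUB⟩ := by
              rw [← hπUB, hπil]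
            show (elemMap U ((π k) : L) hUπk (πi (elemInvMap V (k : L) hVk ⟨pP, hpk⟩)) : P) = _
            rw [h2, h3]
            exact elemMap_eq U _ hUπk hq1 hq2
          rw [hψp] at hqs0
          rw [hOkO] at hOks
          -- z := s ∩ e
          have hse : s ≠ (ln hUV : L) := fun h => hpe (h ▸ hps)
          have hzs : (pt hse : P) ∈ s := pt_left _
          have hze : (pt hse : P) ∈ (ln hUV : L) := pt_right _
          have hslnUB : s ≠ (ln hUB : L) := by
            intro h
            have h1 : pP ∈ (ln hUB : L) := h ▸ hps
            exact hpB (uniqP hlnUBlnVB h1 hpVB (ln_right hUB) (ln_right hVB))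
          have hslnVB : s ≠ (ln hVB : L) := by
            intro h
            have h1 : (pt hlnUBπk : P) ∈ (ln hVB : L) := h ▸ hqs0
            exact hqB (uniqP hlnUBlnVB hq1 h1 (ln_right hUB) (ln_right hVB))
          have hzU : (pt hse : P) ≠ U := by
            intro h
            have hUs : U ∈ s := h ▸ hzs
            exact hqU (uniqP hslnUB hqs0 hq1 hUs (ln_left hUB))
          have hzV : (pt hse : P) ≠ V := by
            intro h
            have hVs : V ∈ s := h ▸ hzs
            exact hpV (uniqP hslnVB hps hpVB hVs (ln_left hVB))
          -- value of the perspectivity stage at k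
          have hst2 : (perspMap (pt hkukv) (ln hVB) (ln hUV) hOlnVB hOe
              (elemMap U (ln hVB) hUlnVB k) : P) = pt hse := by
            apply perspMap_eq _ _ _ hOlnVB hOe hOks _ hzs hze
            exact hps
          -- r := (B X) ∩ e
          have hBX : B ≠ pt hkπk := fun h => hXB h.symm
          have hBXe : (ln hBX : L) ≠ (ln hUV : L) := fun h => hBe (h ▸ ln_left hBX)
          have hrt : (pt hBXe : P) ∈ (ln hBX : L) := pt_left _
          have hre : (pt hBXe : P) ∈ (ln hUV : L) := pt_right _
          -- nondegeneracies for the quadrangle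
          have hXs : pt hkπk ∉ s := by
            intro h
            by_cases h1 : s = (k : L)
            · have hqk : (pt hlnUBπk : P) ∈ (k : L) := h1 ▸ hqs0
              exact hqU (uniqP hk_b hqk hq1 k.2 (ln_left hUB))
            · exact hpX (uniqP h1 hps hpk h hXk)
          have hBs : B ∉ s := by
            intro h
            exact hpB (uniqP hslnVB hps hpVB h (ln_right hVB))
          -- the machine quadrangle at z
          obtain ⟨p', q', X', B', n₁', n₂', m₁', m₂', s', t',
            b1, b2, b3, b4, b5, b6, b7, b8, b9, b10, b11, b12,
            b13, b14, b15, b16, b17, b18, b19, b20, b21, b22, b23, b24⟩ :=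
            hHq (pt hse) hze hzU hzV
          have hreq : pt hBXe = (H ⟨pt hse, hze⟩ : P) :=
            quad_unique hT hUV hUe hVe hze hzU hzV hre (H ⟨pt hse, hze⟩).2
              hpk hXk k.2 hq1 (ln_right hUB) (ln_left hUB)
              hpVB (ln_right hVB) (ln_left hVB) hq2 hXπk (π k).2
              hps hqs0 hzs (ln_right hBX) (ln_left hBX) hrt
              hpe hXe hBe hXs hBs (fun h => hBX h.symm)
              b1 b2 b3 b4 b5 b6 b7 b8 b9 b10 b11 b12 b13 b14 b15 b16 b17 b18
              b19 b20 b21 b22 b23 b24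
          refine ⟨pt hkπk, hXk, hXπk, ?_⟩
          have hmem := hρmem k
          have hst2' : perspMap (pt hkukv) (ln hVB) (ln hUV) hOlnVB hOe
              (elemMap U (ln hVB) hUlnVB k) = ⟨pt hse, hze⟩ := Subtype.ext hst2
          rw [hst2'] at hmem
          have hrB : B ≠ (pt hBXe : P) := fun h => hBe (h ▸ hre)
          have hmem' : (pt hBXe : P) ∈ (ρ k : L) := by rw [hreq]; exact hmem
          have hlineq : (ρ k : L) = ln hBX := uniqL hrB (ρ k).2 hmem' (ln_left hBX) hrt
          rw [hlineq]
          exact ln_right hBX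
  have hρnp : ∀ k, (ρ k : L) ≠ (k : L) := by
    intro k hc
    have hBk : B ∈ (k : L) := hc ▸ (ρ k).2
    have hk_b : (k : L) = ln hUB := uniqL hUB k.2 hBk (ln_left hUB) (ln_right hUB)
    have h1 : (elemMap U (ln hVB) hUlnVB k : P) = B :=
      elemMap_eq U (ln hVB) hUlnVB (by rw [hk_b]; exact ln_right hUB) (ln_right hVB)
    have h1' : (elemMap U (ln hVB) hUlnVB k : P) ∈ (ln hOB : L) := by
      rw [h1]; exact ln_right hOB
    have h2 : (perspMap (pt hkukv) (ln hVB) (ln hUV) hOlnVB hOe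
        (elemMap U (ln hVB) hUlnVB k) : P) ∈ (ln hOB : L) :=
      perspMap_collinear _ _ _ hOlnVB hOe _ (ln_left hOB) h1'
    have hwU : (perspMap (pt hkukv) (ln hVB) (ln hUV) hOlnVB hOe
        (elemMap U (ln hVB) hUlnVB k) : P) ≠ U := by
      intro h
      have h3 : U ∈ (ln hOB : L) := by
        have h2' := h2
        rw [h] at h2'
        exact h2'
      have h4 : (ln hOB : L) = (ku : L) := uniqL hOU (ln_left hOB) h3 hOku hUku
      exact hBku (h4 ▸ ln_right hOB)
    have h5 : (H (perspMap (pt hkukv) (ln hVB) (ln hUV) hOlnVB hOe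
        (elemMap U (ln hVB) hUlnVB k)) : P) ∈ (ln hUB : L) := by
      have := hρmem k
      rw [hc, hk_b] at this
      exact this
    have h6 : (H (perspMap (pt hkukv) (ln hVB) (ln hUV) hOlnVB hOe
        (elemMap U (ln hVB) hUlnVB k)) : P) = U := by
      have hlnUBe : (ln hUB : L) ≠ ln hUV := fun h => hBe (h ▸ ln_right hUB)
      exact uniqP hlnUBe h5 (H _).2 (ln_left hUB) hUe
    have h7 : H (perspMap (pt hkukv) (ln hVB) (ln hUV) hOlnVB hOe
        (elemMap U (ln hVB) hUlnVB k)) = H ⟨U, hUe⟩ := by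
      rw [hHUeq]
      exact Subtype.ext h6
    have h8 := congrArg Hi h7
    rw [hHil, hHil] at h8
    exact hwU (congrArg Subtype.val h8)
  refine ⟨ρ, hρP, hρnp, ?_⟩
  ext W
  constructor
  · rintro ⟨k, hWk, hWρk⟩
    obtain ⟨X₀, hX₀k, hX₀πk, hX₀ρk⟩ := hKEY k
    have : W = X₀ := uniqP (hρnp k) hWρk hWk hX₀ρk hX₀k
    exact ⟨k, hWk, this ▸ hX₀πk⟩
  · rintro ⟨k, hWk, hWπk⟩
    obtain ⟨X₀, hX₀k, hX₀πk, hX₀ρk⟩ := hKEY k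
    have : W = X₀ := uniqP (hnp k) hWπk hWk hX₀πk hX₀k
    exact ⟨k, hWk, this ▸ hX₀ρk⟩

end FPC

namespace FPC

open Configuration

variable {P L : Type u} [Membership P L] [Configuration.ProjectivePlane P L]

/-- The two base points of a conic may be interchanged. -/
lemma swapBase {U V : P} {π : {k : L // U ∈ k} → {k : L // V ∈ k}}
    (hπ : IsProj P L (.pencil U) (.pencil V) π)
    (hnp : ∀ k, (π k : L) ≠ (k : L)) :
    ∃ σ : {k : L // V ∈ k} → {k : L // U ∈ k},
      IsProj P L (.pencil V) (.pencil U) σ ∧ (∀ m, (σ m : L) ≠ (m : L)) ∧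
      conicSet P L V U σ = conicSet P L U V π := by
  obtain ⟨πi, hπiP, hπil, hπir⟩ := exists_inverse hπ
  refine ⟨πi, hπiP, ?_, ?_⟩
  · intro m hc
    have h1 := hnp (πi m)
    rw [hπir] at h1
    exact h1 hc.symm
  · ext W
    constructor
    · rintro ⟨m, hWm, hWσ⟩
      refine ⟨πi m, hWσ, ?_⟩
      rw [hπir]
      exact hWm
    · rintro ⟨k, hWk, hWπ⟩
      refine ⟨π k, hWπ, ?_⟩
      rw [hπil]
      exact hWk

/-- Any two distinct points of a conic may serve as its base points. -/
lemma toAB (hT : AxiomT P L) (h6 : LinesHaveAtLeast P L 6)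
    {U V A B : P} {π : {k : L // U ∈ k} → {k : L // V ∈ k}}
    (hUV : U ≠ V) (hπ : IsProj P L (.pencil U) (.pencil V) π)
    (hnp : ∀ k, (π k : L) ≠ (k : L)) (hAB : A ≠ B)
    (hA : A ∈ conicSet P L U V π) (hB : B ∈ conicSet P L U V π) :
    ∃ ρ : {k : L // A ∈ k} → {k : L // B ∈ k},
      IsProj P L (.pencil A) (.pencil B) ρ ∧ (∀ k, (ρ k : L) ≠ (k : L)) ∧
      conicSet P L A B ρ = conicSet P L U V π := by
  -- step 1 : move the first base point to A
  have step1 : ∃ (W : P) (τ : {k : L // A ∈ k} → {k : L // W ∈ k}),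
      A ≠ W ∧ IsProj P L (.pencil A) (.pencil W) τ ∧ (∀ k, (τ k : L) ≠ (k : L)) ∧
      conicSet P L A W τ = conicSet P L U V π := by
    by_cases hAU : A = U
    · subst hAU
      exact ⟨V, π, hUV, hπ, hnp, rfl⟩
    · by_cases hAV : A = V
      · subst hAV
        obtain ⟨σ, hσP, hσnp, hσeq⟩ := swapBase hπ hnp
        exact ⟨U, σ, fun h => hUV h.symm, hσP, hσnp, hσeq⟩
      · obtain ⟨ρ₀, hρ₀P, hρ₀np, hρ₀eq⟩ := baseChange hT h6 hUV hπ hnp hA hAU hAV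
        obtain ⟨σ₀, hσ₀P, hσ₀np, hσ₀eq⟩ := swapBase hρ₀P hρ₀np
        exact ⟨U, σ₀, hAU, hσ₀P, hσ₀np, hσ₀eq.trans hρ₀eq⟩
  obtain ⟨W, τ, hAW, hτP, hτnp, hτeq⟩ := step1
  by_cases hBW : B = W
  · subst hBW
    exact ⟨τ, hτP, hτnp, hτeq⟩
  · have hB' : B ∈ conicSet P L A W τ := by rw [hτeq]; exact hB
    obtain ⟨ρ, hρP, hρnp, hρeq⟩ :=
      baseChange hT h6 hAW hτP hτnp hB' (fun h => hAB h.symm) hBW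
    exact ⟨ρ, hρP, hρnp, hρeq.trans hτeq⟩

end FPC

namespace FPC

open Configuration

variable {P L : Type u} [Membership P L] [Configuration.ProjectivePlane P L]

/-- Existence of a conic through five points, no three collinear. -/
lemma existsConic (A B C D E : P)
    (hAB : A ≠ B) (hAC : A ≠ C) (hAD : A ≠ D) (hAE : A ≠ E)
    (hBC : B ≠ C) (hBD : B ≠ D) (hBE : B ≠ E)
    (hCD : C ≠ D) (hCE : C ≠ E) (hDE : D ≠ E)
    (hABC : ¬ Col P L A B C) (hABD : ¬ Col P L A B D) (hABE : ¬ Col P L A B E)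
    (hACD : ¬ Col P L A C D) (hACE : ¬ Col P L A C E) (hADE : ¬ Col P L A D E)
    (hBCD : ¬ Col P L B C D) (hBDE : ¬ Col P L B D E) (hBCE : ¬ Col P L B C E)
    (hCDE : ¬ Col P L C D E) :
    ∃ π : {k : L // A ∈ k} → {k : L // B ∈ k},
      IsProj P L (.pencil A) (.pencil B) π ∧ (∀ k, (π k : L) ≠ (k : L)) ∧
      A ∈ conicSet P L A B π ∧ B ∈ conicSet P L A B π ∧ C ∈ conicSet P L A B π ∧
      D ∈ conicSet P L A B π ∧ E ∈ conicSet P L A B π := by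
  have hAlnCD : A ∉ (ln hCD : L) := fun h => hACD ⟨ln hCD, h, ln_left hCD, ln_right hCD⟩
  have hBlnCE : B ∉ (ln hCE : L) := fun h => hBCE ⟨ln hCE, h, ln_left hCE, ln_right hCE⟩
  have hne1 : (ln hAE : L) ≠ (ln hBD : L) := by
    intro h
    exact hABE ⟨ln hAE, ln_left hAE, by rw [h]; exact ln_left hBD, ln_right hAE⟩
  have hO1 : (pt hne1 : P) ∈ (ln hAE : L) := pt_left _
  have hO2 : (pt hne1 : P) ∈ (ln hBD : L) := pt_right _
  have hlnBDlnCD : (ln hBD : L) ≠ (ln hCD : L) := by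
    intro h
    exact hBCD ⟨ln hCD, by rw [← h]; exact ln_left hBD, ln_left hCD, ln_right hCD⟩
  have hOlnCD : (pt hne1 : P) ∉ (ln hCD : L) := by
    intro h
    have h1 : (pt hne1 : P) = D :=
      uniqP hlnBDlnCD hO2 h (ln_right hBD) (ln_right hCD)
    exact hADE ⟨ln hAE, ln_left hAE, by rw [← h1]; exact hO1, ln_right hAE⟩
  have hlnAElnCE : (ln hAE : L) ≠ (ln hCE : L) := by
    intro h
    exact hACE ⟨ln hCE, by rw [← h]; exact ln_left hAE, ln_left hCE, ln_right hCE⟩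
  have hOlnCE : (pt hne1 : P) ∉ (ln hCE : L) := by
    intro h
    have h1 : (pt hne1 : P) = E :=
      uniqP hlnAElnCE hO1 h (ln_right hAE) (ln_right hCE)
    exact hBDE ⟨ln hBD, ln_left hBD, ln_right hBD, by rw [← h1]; exact hO2⟩
  have hOC : (pt hne1 : P) ≠ C := by
    intro h
    exact hBCD ⟨ln hBD, ln_left hBD, by rw [← h]; exact hO2, ln_right hBD⟩
  obtain ⟨π, hπdef⟩ : ∃ π : {k : L // A ∈ k} → {k : L // B ∈ k},
      π = fun k => elemInvMap B (ln hCE) hBlnCE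
        (perspMap (pt hne1) (ln hCD) (ln hCE) hOlnCD hOlnCE
          (elemMap A (ln hCD) hAlnCD k)) := ⟨_, rfl⟩
  have hπP : IsProj P L (.pencil A) (.pencil B) π := by
    rw [hπdef]
    exact IsProj.comp (IsProj.comp (elemMap_isProj A (ln hCD) hAlnCD)
      (perspMap_isProj (pt hne1) (ln hCD) (ln hCE) hOlnCD hOlnCE))
      (elemInvMap_isProj B (ln hCE) hBlnCE)
  have hπmem : ∀ k, (perspMap (pt hne1) (ln hCD) (ln hCE) hOlnCD hOlnCE
      (elemMap A (ln hCD) hAlnCD k) : P) ∈ (π k : L) := by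
    intro k
    rw [hπdef]
    exact elemInvMap_mem B (ln hCE) hBlnCE _
  have hπB : ∀ k, B ∈ (π k : L) := fun k => (π k).2
  -- membership of C
  have hCmem : C ∈ conicSet P L A B π := by
    refine ⟨⟨ln hAC, ln_left hAC⟩, ln_right hAC, ?_⟩
    have h1 : (elemMap A (ln hCD) hAlnCD ⟨ln hAC, ln_left hAC⟩ : P) = C :=
      elemMap_eq A _ hAlnCD (ln_right hAC) (ln_left hCD)
    have h1' : (elemMap A (ln hCD) hAlnCD ⟨ln hAC, ln_left hAC⟩ : P) ∈ (ln hOC : L) := by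
      rw [h1]; exact ln_right hOC
    have h2 : (perspMap (pt hne1) (ln hCD) (ln hCE) hOlnCD hOlnCE
        (elemMap A (ln hCD) hAlnCD ⟨ln hAC, ln_left hAC⟩) : P) = C :=
      perspMap_eq _ _ _ hOlnCD hOlnCE (ln_left hOC) h1' (ln_right hOC) (ln_left hCE)
    have h3 := hπmem ⟨ln hAC, ln_left hAC⟩
    rw [h2] at h3
    exact h3
  -- membership of D
  have hDmem : D ∈ conicSet P L A B π := by
    refine ⟨⟨ln hAD, ln_left hAD⟩, ln_right hAD, ?_⟩
    have h1 : (elemMap A (ln hCD) hAlnCD ⟨ln hAD, ln_left hAD⟩ : P) = D :=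
      elemMap_eq A _ hAlnCD (ln_right hAD) (ln_right hCD)
    have h1' : (elemMap A (ln hCD) hAlnCD ⟨ln hAD, ln_left hAD⟩ : P) ∈ (ln hBD : L) := by
      rw [h1]; exact ln_right hBD
    have h2 : (perspMap (pt hne1) (ln hCD) (ln hCE) hOlnCD hOlnCE
        (elemMap A (ln hCD) hAlnCD ⟨ln hAD, ln_left hAD⟩) : P) ∈ (ln hBD : L) :=
      perspMap_collinear _ _ _ hOlnCD hOlnCE _ hO2 h1'
    have h2' : (perspMap (pt hne1) (ln hCD) (ln hCE) hOlnCD hOlnCE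
        (elemMap A (ln hCD) hAlnCD ⟨ln hAD, ln_left hAD⟩) : P) ∈ (ln hCE : L) :=
      (perspMap (pt hne1) (ln hCD) (ln hCE) hOlnCD hOlnCE
        (elemMap A (ln hCD) hAlnCD ⟨ln hAD, ln_left hAD⟩)).2
    have hBst2 : B ≠ (perspMap (pt hne1) (ln hCD) (ln hCE) hOlnCD hOlnCE
        (elemMap A (ln hCD) hAlnCD ⟨ln hAD, ln_left hAD⟩) : P) :=
      fun h => hBlnCE (h ▸ h2')
    have h3 := hπmem ⟨ln hAD, ln_left hAD⟩
    have h4 : (π ⟨ln hAD, ln_left hAD⟩ : L) = ln hBD :=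
      uniqL hBst2 (hπB _) h3 (ln_left hBD) h2
    rw [h4]
    exact ln_right hBD
  -- membership of E
  have hEmem : E ∈ conicSet P L A B π := by
    refine ⟨⟨ln hAE, ln_left hAE⟩, ln_right hAE, ?_⟩
    have h1 : (elemMap A (ln hCD) hAlnCD ⟨ln hAE, ln_left hAE⟩ : P) ∈ (ln hAE : L) :=
      elemMap_mem A (ln hCD) hAlnCD ⟨ln hAE, ln_left hAE⟩
    have h2 : (perspMap (pt hne1) (ln hCD) (ln hCE) hOlnCD hOlnCE
        (elemMap A (ln hCD) hAlnCD ⟨ln hAE, ln_left hAE⟩) : P) = E :=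
      perspMap_eq _ _ _ hOlnCD hOlnCE hO1 h1 (ln_right hAE) (ln_right hCE)
    have h3 := hπmem ⟨ln hAE, ln_left hAE⟩
    rw [h2] at h3
    exact h3
  -- membership of B
  have hBmem : B ∈ conicSet P L A B π :=
    ⟨⟨ln hAB, ln_left hAB⟩, ln_right hAB, hπB _⟩
  -- membership of A
  have hlnABlnCE : (ln hAB : L) ≠ (ln hCE : L) := by
    intro h
    exact hABC ⟨ln hAB, ln_left hAB, ln_right hAB, by rw [h]; exact ln_left hCE⟩
  have hH1 : (pt hlnABlnCE : P) ∈ (ln hAB : L) := pt_left _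
  have hH2 : (pt hlnABlnCE : P) ∈ (ln hCE : L) := pt_right _
  have hOexAB : (pt hne1 : P) ∉ (ln hAB : L) := by
    intro h
    have hlnAElnAB : (ln hAE : L) ≠ (ln hAB : L) := by
      intro h2
      exact hABE ⟨ln hAB, ln_left hAB, ln_right hAB, by rw [← h2]; exact ln_right hAE⟩
    have h1 : (pt hne1 : P) = A :=
      uniqP hlnAElnAB hO1 h (ln_left hAE) (ln_left hAB)
    exact hABD ⟨ln hBD, by rw [← h1]; exact hO2, ln_left hBD, ln_right hBD⟩
  have hOH : (pt hne1 : P) ≠ (pt hlnABlnCE : P) := fun h => hOexAB (h ▸ hH1)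
  have hOHlnCD : (ln hOH : L) ≠ (ln hCD : L) := fun h => hOlnCD (h ▸ ln_left hOH)
  have hM1 : (pt hOHlnCD : P) ∈ (ln hOH : L) := pt_left _
  have hM2 : (pt hOHlnCD : P) ∈ (ln hCD : L) := pt_right _
  have hAM : A ≠ (pt hOHlnCD : P) := fun h => hAlnCD (h ▸ hM2)
  have hAmem : A ∈ conicSet P L A B π := by
    refine ⟨⟨ln hAM, ln_left hAM⟩, ln_left hAM, ?_⟩
    have h1 : (elemMap A (ln hCD) hAlnCD ⟨ln hAM, ln_left hAM⟩ : P) = pt hOHlnCD :=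
      elemMap_eq A _ hAlnCD (ln_right hAM) hM2
    have h1' : (elemMap A (ln hCD) hAlnCD ⟨ln hAM, ln_left hAM⟩ : P) ∈ (ln hOH : L) := by
      rw [h1]; exact hM1
    have h2 : (perspMap (pt hne1) (ln hCD) (ln hCE) hOlnCD hOlnCE
        (elemMap A (ln hCD) hAlnCD ⟨ln hAM, ln_left hAM⟩) : P) = pt hlnABlnCE :=
      perspMap_eq _ _ _ hOlnCD hOlnCE (ln_left hOH) h1' (ln_right hOH) hH2
    have h3 := hπmem ⟨ln hAM, ln_left hAM⟩
    rw [h2] at h3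
    have hBH : B ≠ (pt hlnABlnCE : P) := fun h => hBlnCE (h ▸ hH2)
    have h4 : (π ⟨ln hAM, ln_left hAM⟩ : L) = ln hAB :=
      uniqL hBH (hπB _) h3 (ln_right hAB) hH1
    rw [h4]
    exact ln_left hAB
  -- nonperspectivity
  have hπnp : ∀ k, (π k : L) ≠ (k : L) := by
    intro k hc
    have hBk : B ∈ (k : L) := hc ▸ hπB k
    have hkAB : (k : L) = ln hAB := uniqL hAB k.2 hBk (ln_left hAB) (ln_right hAB)
    have hG1 : (elemMap A (ln hCD) hAlnCD k : P) ∈ (ln hAB : L) := by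
      rw [← hkAB]
      exact elemMap_mem A _ hAlnCD k
    have hG2 : (elemMap A (ln hCD) hAlnCD k : P) ∈ (ln hCD : L) :=
      (elemMap A (ln hCD) hAlnCD k).2
    have hOG : (pt hne1 : P) ≠ (elemMap A (ln hCD) hAlnCD k : P) :=
      fun h => hOlnCD (h ▸ hG2)
    have hst2a : (perspMap (pt hne1) (ln hCD) (ln hCE) hOlnCD hOlnCE
        (elemMap A (ln hCD) hAlnCD k) : P) ∈ (ln hOG : L) :=
      perspMap_collinear _ _ _ hOlnCD hOlnCE _ (ln_left hOG) (ln_right hOG)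
    have hst2b : (perspMap (pt hne1) (ln hCD) (ln hCE) hOlnCD hOlnCE
        (elemMap A (ln hCD) hAlnCD k) : P) ∈ (ln hCE : L) :=
      (perspMap (pt hne1) (ln hCD) (ln hCE) hOlnCD hOlnCE
        (elemMap A (ln hCD) hAlnCD k)).2
    have hst2c : (perspMap (pt hne1) (ln hCD) (ln hCE) hOlnCD hOlnCE
        (elemMap A (ln hCD) hAlnCD k) : P) ∈ (ln hAB : L) := by
      have h3 := hπmem k
      rw [hc, hkAB] at h3
      exact h3
    have hGH : (perspMap (pt hne1) (ln hCD) (ln hCE) hOlnCD hOlnCE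
        (elemMap A (ln hCD) hAlnCD k) : P) = pt hlnABlnCE :=
      uniqP hlnABlnCE hst2c hst2b hH1 hH2
    have hH_OG : (pt hlnABlnCE : P) ∈ (ln hOG : L) := by
      rw [← hGH]
      exact hst2a
    have hlnCDlnCE : (ln hCD : L) ≠ (ln hCE : L) := by
      intro h
      exact hCDE ⟨ln hCD, ln_left hCD, ln_right hCD, by rw [h]; exact ln_right hCE⟩
    have hGneH : (elemMap A (ln hCD) hAlnCD k : P) ≠ (pt hlnABlnCE : P) := by
      intro h
      have h1 : (pt hlnABlnCE : P) ∈ (ln hCD : L) := h ▸ hG2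
      have h2 : (pt hlnABlnCE : P) = C := uniqP hlnCDlnCE h1 hH2 (ln_left hCD) (ln_left hCE)
      exact hABC ⟨ln hAB, ln_left hAB, ln_right hAB, by rw [← h2]; exact hH1⟩
    have h5 : (ln hOG : L) = ln hAB := uniqL hGneH (ln_right hOG) hH_OG hG1 hH1
    exact hOexAB (h5 ▸ ln_left hOG)
  exact ⟨π, hπP, hπnp, hAmem, hBmem, hCmem, hDmem, hEmem⟩

end FPC
/-- **Five-point conic.** Given any five distinct points, each three of which
are noncollinear, there exists a conic containing all five points; moreover any
two conics containing these five points are equal as sets of points. -/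
theorem five_point_conic
    [Configuration.ProjectivePlane P L]
    (h6 : LinesHaveAtLeast P L 6) (hT : AxiomT P L)
    (A B C D E : P)
    (hAB : A ≠ B) (hAC : A ≠ C) (hAD : A ≠ D) (hAE : A ≠ E)
    (hBC : B ≠ C) (hBD : B ≠ D) (hBE : B ≠ E)
    (hCD : C ≠ D) (hCE : C ≠ E) (hDE : D ≠ E)
    (hABC : ¬ Col P L A B C) (hABD : ¬ Col P L A B D) (hABE : ¬ Col P L A B E)
    (hACD : ¬ Col P L A C D) (hACE : ¬ Col P L A C E) (hADE : ¬ Col P L A D E)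
    (hBCD : ¬ Col P L B C D) (hBCE : ¬ Col P L B C E) (hBDE : ¬ Col P L B D E)
    (hCDE : ¬ Col P L C D E) :
    (∃ κ : Set P, IsConic P L κ ∧ A ∈ κ ∧ B ∈ κ ∧ C ∈ κ ∧ D ∈ κ ∧ E ∈ κ) ∧
    ∀ κ₁ κ₂ : Set P, IsConic P L κ₁ → IsConic P L κ₂ →
      A ∈ κ₁ → B ∈ κ₁ → C ∈ κ₁ → D ∈ κ₁ → E ∈ κ₁ →
      A ∈ κ₂ → B ∈ κ₂ → C ∈ κ₂ → D ∈ κ₂ → E ∈ κ₂ →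
      κ₁ = κ₂ := by
  constructor
  · obtain ⟨π, hπP, hπnp, hAm, hBm, hCm, hDm, hEm⟩ :=
      FPC.existsConic A B C D E hAB hAC hAD hAE hBC hBD hBE hCD hCE hDE
        hABC hABD hABE hACD hACE hADE hBCD hBDE hBCE hCDE
    exact ⟨conicSet P L A B π, ⟨A, B, π, hAB, hπP, hπnp, rfl⟩, hAm, hBm, hCm, hDm, hEm⟩
  · intro κ₁ κ₂ h1 h2 hA1 hB1 hC1 hD1 hE1 hA2 hB2 hC2 hD2 hE2
    obtain ⟨U₁, V₁, π₁, hUV₁, hπ₁, hnp₁, hκ₁⟩ := h1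
    obtain ⟨U₂, V₂, π₂, hUV₂, hπ₂, hnp₂, hκ₂⟩ := h2
    subst hκ₁
    subst hκ₂
    obtain ⟨ρ₁, hρ₁P, hρ₁np, hρ₁eq⟩ := FPC.toAB hT h6 hUV₁ hπ₁ hnp₁ hAB hA1 hB1
    obtain ⟨ρ₂, hρ₂P, hρ₂np, hρ₂eq⟩ := FPC.toAB hT h6 hUV₂ hπ₂ hnp₂ hAB hA2 hB2
    have hC1' : C ∈ conicSet P L A B ρ₁ := by rw [hρ₁eq]; exact hC1
    have hD1' : D ∈ conicSet P L A B ρ₁ := by rw [hρ₁eq]; exact hD1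
    have hE1' : E ∈ conicSet P L A B ρ₁ := by rw [hρ₁eq]; exact hE1
    have hC2' : C ∈ conicSet P L A B ρ₂ := by rw [hρ₂eq]; exact hC2
    have hD2' : D ∈ conicSet P L A B ρ₂ := by rw [hρ₂eq]; exact hD2
    have hE2' : E ∈ conicSet P L A B ρ₂ := by rw [hρ₂eq]; exact hE2
    have e1 : ρ₁ ⟨FPC.ln hAC, FPC.ln_left hAC⟩ = ρ₂ ⟨FPC.ln hAC, FPC.ln_left hAC⟩ :=
      (FPC.conic_mem_char hC1' hAC hBC).trans (FPC.conic_mem_char hC2' hAC hBC).symm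
    have e2 : ρ₁ ⟨FPC.ln hAD, FPC.ln_left hAD⟩ = ρ₂ ⟨FPC.ln hAD, FPC.ln_left hAD⟩ :=
      (FPC.conic_mem_char hD1' hAD hBD).trans (FPC.conic_mem_char hD2' hAD hBD).symm
    have e3 : ρ₁ ⟨FPC.ln hAE, FPC.ln_left hAE⟩ = ρ₂ ⟨FPC.ln hAE, FPC.ln_left hAE⟩ :=
      (FPC.conic_mem_char hE1' hAE hBE).trans (FPC.conic_mem_char hE2' hAE hBE).symm
    have d1 : (⟨FPC.ln hAC, FPC.ln_left hAC⟩ : {k : L // A ∈ k}) ≠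
        ⟨FPC.ln hAD, FPC.ln_left hAD⟩ := by
      intro h
      have h1 : (FPC.ln hAC : L) = FPC.ln hAD := congrArg Subtype.val h
      exact hACD ⟨FPC.ln hAC, FPC.ln_left hAC, FPC.ln_right hAC,
        by rw [h1]; exact FPC.ln_right hAD⟩
    have d2 : (⟨FPC.ln hAC, FPC.ln_left hAC⟩ : {k : L // A ∈ k}) ≠
        ⟨FPC.ln hAE, FPC.ln_left hAE⟩ := by
      intro h
      have h1 : (FPC.ln hAC : L) = FPC.ln hAE := congrArg Subtype.val h
      exact hACE ⟨FPC.ln hAC, FPC.ln_left hAC, FPC.ln_right hAC,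
        by rw [h1]; exact FPC.ln_right hAE⟩
    have d3 : (⟨FPC.ln hAD, FPC.ln_left hAD⟩ : {k : L // A ∈ k}) ≠
        ⟨FPC.ln hAE, FPC.ln_left hAE⟩ := by
      intro h
      have h1 : (FPC.ln hAD : L) = FPC.ln hAE := congrArg Subtype.val h
      exact hADE ⟨FPC.ln hAD, FPC.ln_left hAD, FPC.ln_right hAD,
        by rw [h1]; exact FPC.ln_right hAE⟩
    have hagree : ∀ w, ρ₁ w = ρ₂ w :=
      FPC.proj_ext3 hT hρ₁P hρ₂P d1 d2 d3 e1 e2 e3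
    have hsets : conicSet P L A B ρ₁ = conicSet P L A B ρ₂ := by
      ext W
      constructor
      · rintro ⟨k, hWk, hWρ⟩
        exact ⟨k, hWk, by rw [← hagree k]; exact hWρ⟩
      · rintro ⟨k, hWk, hWρ⟩
        exact ⟨k, hWk, by rw [hagree k]; exact hWρ⟩
    rw [← hρ₁eq, ← hρ₂eq]
    exact hsets
end

section
/- Pascal's Theorem: Let ABCDEF be a simple hexagon inscribed in a conic κ, i.e., A, B, C, D, E, F are six distinct points of κ. Then the pairs of opposite sides (AB, DE), (BC, EF), (CD, FA) consist of distinct lines, and the three points of intersection AB·DE, BC·EF, CD·FA are pairwise distinct and collinear. -/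
open Configuration

universe u
variable (P L : Type u) [Membership P L]

namespace PascalAux

open Configuration

variable {P L : Type u} [Membership P L] [Configuration.ProjectivePlane P L]

set_option linter.unusedSectionVars false

lemma uniq_pt {X Y : P} {l m : L} (hlm : l ≠ m) (h1 : X ∈ l) (h2 : X ∈ m)
    (h3 : Y ∈ l) (h4 : Y ∈ m) : X = Y :=
  (Configuration.Nondegenerate.eq_or_eq h1 h3 h2 h4).resolve_right hlm

lemma uniq_ln {X Y : P} {l m : L} (hXY : X ≠ Y) (h1 : X ∈ l) (h2 : Y ∈ l)
    (h3 : X ∈ m) (h4 : Y ∈ m) : l = m :=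
  (Configuration.Nondegenerate.eq_or_eq h1 h2 h3 h4).resolve_left hXY

lemma ne_pt_of_mem {O X : P} {l : L} (hO : O ∉ l) (hX : X ∈ l) : O ≠ X :=
  fun h => hO (by rw [h]; exact hX)

lemma ne_ln_of_mem {k l : L} {O : P} (hO : O ∈ k) (hl : O ∉ l) : k ≠ l :=
  fun h => hl (by rw [← h]; exact hO)

/-! ### The elementary maps as explicit functions -/

lemma persp_exists {O : P} {l m : L} (hl : O ∉ l) (hm : O ∉ m) (X : {X : P // X ∈ l}) :
    ∃ Y : {Y : P // Y ∈ m}, ∃ k : L, O ∈ k ∧ (X : P) ∈ k ∧ (Y : P) ∈ k := by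
  have hOX : O ≠ (X : P) := ne_pt_of_mem hl X.2
  have hax := Configuration.HasLines.mkLine_ax (L := L) hOX
  have hkm : (Configuration.HasLines.mkLine hOX : L) ≠ m := ne_ln_of_mem hax.1 hm
  have hax2 := Configuration.HasPoints.mkPoint_ax (P := P) hkm
  exact ⟨⟨Configuration.HasPoints.mkPoint hkm, hax2.2⟩, _, hax.1, hax.2, hax2.1⟩

noncomputable def perspMap {O : P} {l m : L} (hl : O ∉ l) (hm : O ∉ m)
    (X : {X : P // X ∈ l}) : {Y : P // Y ∈ m} :=
  (persp_exists hl hm X).choose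

lemma perspMap_spec {O : P} {l m : L} (hl : O ∉ l) (hm : O ∉ m) (X : {X : P // X ∈ l}) :
    ∃ k : L, O ∈ k ∧ (X : P) ∈ k ∧ ((perspMap hl hm X : P)) ∈ k :=
  (persp_exists hl hm X).choose_spec

lemma isPersp {O : P} {l m : L} (hl : O ∉ l) (hm : O ∉ m) :
    IsRangePersp P L l m (perspMap hl hm) :=
  ⟨O, hl, hm, perspMap_spec hl hm⟩

lemma persp_eq {O : P} {l m : L} (hl : O ∉ l) (hm : O ∉ m) (X : {X : P // X ∈ l})
    {Y : P} (hYm : Y ∈ m) {k : L} (hOk : O ∈ k) (hXk : (X : P) ∈ k) (hYk : Y ∈ k) :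
    perspMap hl hm X = ⟨Y, hYm⟩ := by
  obtain ⟨k', hOk', hXk', hfk'⟩ := perspMap_spec hl hm X
  have hOX : O ≠ (X : P) := ne_pt_of_mem hl X.2
  have hkk : k' = k := uniq_ln hOX hOk' hXk' hOk hXk
  rw [hkk] at hfk'
  have hkm : k ≠ m := ne_ln_of_mem hOk hm
  exact Subtype.ext (uniq_pt hkm hfk' (perspMap hl hm X).2 hYk hYm)

lemma elem_exists {U : P} {l : L} (hU : U ∉ l) (k : {k : L // U ∈ k}) :
    ∃ X : {X : P // X ∈ l}, (X : P) ∈ (k : L) := by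
  have hkl : (k : L) ≠ l := ne_ln_of_mem k.2 hU
  have hax := Configuration.HasPoints.mkPoint_ax (P := P) hkl
  exact ⟨⟨Configuration.HasPoints.mkPoint hkl, hax.2⟩, hax.1⟩

noncomputable def elemMap {U : P} {l : L} (hU : U ∉ l) (k : {k : L // U ∈ k}) :
    {X : P // X ∈ l} :=
  (elem_exists hU k).choose

lemma elemMap_spec {U : P} {l : L} (hU : U ∉ l) (k : {k : L // U ∈ k}) :
    ((elemMap hU k : P)) ∈ (k : L) :=
  (elem_exists hU k).choose_spec

lemma isElem {U : P} {l : L} (hU : U ∉ l) : IsElemMap P L U l (elemMap hU) :=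
  ⟨hU, elemMap_spec hU⟩

lemma elem_eq {U : P} {l : L} (hU : U ∉ l) (k : {k : L // U ∈ k})
    {W : P} (hWk : W ∈ (k : L)) (hWl : W ∈ l) : elemMap hU k = ⟨W, hWl⟩ := by
  have hkl : (k : L) ≠ l := ne_ln_of_mem k.2 hU
  exact Subtype.ext (uniq_pt hkl (elemMap_spec hU k) (elemMap hU k).2 hWk hWl)

lemma elemInv_exists {U : P} {l : L} (hU : U ∉ l) (X : {X : P // X ∈ l}) :
    ∃ k : {k : L // U ∈ k}, (X : P) ∈ (k : L) := by
  have hUX : U ≠ (X : P) := ne_pt_of_mem hU X.2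
  have hax := Configuration.HasLines.mkLine_ax (L := L) hUX
  exact ⟨⟨Configuration.HasLines.mkLine hUX, hax.1⟩, hax.2⟩

noncomputable def elemInvMap {U : P} {l : L} (hU : U ∉ l) (X : {X : P // X ∈ l}) :
    {k : L // U ∈ k} :=
  (elemInv_exists hU X).choose

lemma elemInvMap_spec {U : P} {l : L} (hU : U ∉ l) (X : {X : P // X ∈ l}) :
    (X : P) ∈ ((elemInvMap hU X : L)) :=
  (elemInv_exists hU X).choose_spec

lemma isElemInv {U : P} {l : L} (hU : U ∉ l) : IsElemInv P L U l (elemInvMap hU) :=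
  ⟨hU, elemInvMap_spec hU⟩

lemma elemInv_eq {U : P} {l : L} (hU : U ∉ l) (X : {X : P // X ∈ l})
    {k : L} (hUk : U ∈ k) (hXk : (X : P) ∈ k) : elemInvMap hU X = ⟨k, hUk⟩ := by
  have hUX : U ≠ (X : P) := ne_pt_of_mem hU X.2
  exact Subtype.ext (uniq_ln hUX (elemInvMap hU X).2 (elemInvMap_spec hU X) hUk hXk)

/-! ### Inverses of projectivities -/

theorem proj_inv {a b : Obj P L} {f : a.Carrier → b.Carrier} (hf : IsProj P L a b f) :
    ∃ g : b.Carrier → a.Carrier, IsProj P L b a g ∧ (∀ x, g (f x) = x) ∧ (∀ y, f (g y) = y) := by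
  induction hf with
  | @persp l m f h =>
    obtain ⟨O, hl, hm, hcol⟩ := h
    refine ⟨perspMap hm hl, .persp (isPersp hm hl), fun X => ?_, fun Y => ?_⟩
    · obtain ⟨k, hOk, hXk, hfk⟩ := hcol X
      exact persp_eq hm hl (f X) X.2 hOk hfk hXk
    · obtain ⟨k, hOk, hYk, hgk⟩ := perspMap_spec hm hl Y
      obtain ⟨k', hOk', hXk', hfk'⟩ := hcol (perspMap hm hl Y)
      have hOX : O ≠ ((perspMap hm hl Y : P)) := ne_pt_of_mem hl (perspMap hm hl Y).2
      have hkk : k = k' := uniq_ln hOX hOk hgk hOk' hXk'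
      rw [hkk] at hYk
      have hkm : k' ≠ m := ne_ln_of_mem hOk' hm
      exact Subtype.ext (uniq_pt hkm hfk' (f _).2 hYk Y.2)
  | @elem U l f h =>
    obtain ⟨hU, hval⟩ := h
    refine ⟨elemInvMap hU, .elemInv (isElemInv hU), fun k => ?_, fun X => ?_⟩
    · exact elemInv_eq hU (f k) k.2 (hval k)
    · have h1 : ((f (elemInvMap hU X) : P)) ∈ ((elemInvMap hU X : L)) := hval _
      have h2 : (X : P) ∈ ((elemInvMap hU X : L)) := elemInvMap_spec hU X
      have hkl : ((elemInvMap hU X : L)) ≠ l := ne_ln_of_mem (elemInvMap hU X).2 hU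
      exact Subtype.ext (uniq_pt hkl h1 (f _).2 h2 X.2)
  | @elemInv U l f h =>
    obtain ⟨hU, hval⟩ := h
    refine ⟨elemMap hU, .elem (isElem hU), fun X => ?_, fun k => ?_⟩
    · exact elem_eq hU (f X) (hval X) X.2
    · have h1 : ((elemMap hU k : P)) ∈ ((f (elemMap hU k) : L)) := hval _
      have h2 : ((elemMap hU k : P)) ∈ (k : L) := elemMap_spec hU k
      have hUe : U ≠ ((elemMap hU k : P)) := ne_pt_of_mem hU (elemMap hU k).2
      exact Subtype.ext (uniq_ln hUe (f _).2 h1 k.2 h2)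
  | @comp a b c f g h1 h2 ih1 ih2 =>
    obtain ⟨f', pf', lf, rf⟩ := ih1
    obtain ⟨g', pg', lg, rg⟩ := ih2
    refine ⟨f' ∘ g', .comp pg' pf', fun x => ?_, fun y => ?_⟩
    · show f' (g' (g (f x))) = x
      rw [lg, lf]
    · show g (f (f' (g' y))) = y
      rw [rf, rg]

theorem proj_injective {a b : Obj P L} {f : a.Carrier → b.Carrier}
    (hf : IsProj P L a b f) : Function.Injective f := by
  obtain ⟨g, _, hl, _⟩ := proj_inv hf
  exact fun x y h => by rw [← hl x, h, hl y]

/-! ### Secant property and good pairs -/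

variable (L) in
/-- Every line meets `κ` in at most two points. -/
def SecantProp (κ : Set P) : Prop :=
  ∀ s : L, ∀ X ∈ κ, ∀ Y ∈ κ, ∀ Z ∈ κ, X ∈ s → Y ∈ s → Z ∈ s → X = Y ∨ X = Z ∨ Y = Z

variable (L) in
/-- There is a projectivity from the pencil of `U` to the pencil of `V` mapping
`UX` to `VX` for every point `X` of `κ` other than `U, V`. -/
def GoodPair (κ : Set P) (U V : P) : Prop :=
  U ≠ V ∧ ∃ φ : {k : L // U ∈ k} → {k : L // V ∈ k},
    IsProj P L (.pencil U) (.pencil V) φ ∧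
      ∀ X ∈ κ, X ≠ U → X ≠ V → ∀ k : {k : L // U ∈ k}, X ∈ (k : L) → X ∈ ((φ k : L))

lemma notMem_side {κ : Set P} (hsec : SecantProp L κ) {A B C : P} (hA : A ∈ κ) (hB : B ∈ κ)
    (hC : C ∈ κ) (hAB : A ≠ B) (hAC : A ≠ C) (hBC : B ≠ C) {s : L} (hBs : B ∈ s)
    (hCs : C ∈ s) : A ∉ s := by
  intro hAs
  rcases hsec s A hA B hB C hC hAs hBs hCs with h | h | h
  exacts [hAB h, hAC h, hBC h]

lemma pick_two {α : Type*} {Q : α → Prop} {X Y Z A : α} (hX : Q X) (hY : Q Y) (hZ : Q Z)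
    (hXY : X ≠ Y) (hXZ : X ≠ Z) (hYZ : Y ≠ Z) :
    ∃ W₁ W₂, Q W₁ ∧ Q W₂ ∧ W₁ ≠ W₂ ∧ W₁ ≠ A ∧ W₂ ≠ A := by
  by_cases hXA : X = A
  · exact ⟨Y, Z, hY, hZ, hYZ, fun h => hXY (hXA.trans h.symm), fun h => hXZ (hXA.trans h.symm)⟩
  by_cases hYA : Y = A
  · exact ⟨X, Z, hX, hZ, hXZ, hXA, fun h => hYZ (hYA.trans h.symm)⟩
  exact ⟨X, Y, hX, hY, hXY, hXA, hYA⟩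

lemma pick_one {α : Type*} {Q : α → Prop} {X Y Z A B : α} (hX : Q X) (hY : Q Y) (hZ : Q Z)
    (hXY : X ≠ Y) (hXZ : X ≠ Z) (hYZ : Y ≠ Z) :
    ∃ W, Q W ∧ W ≠ A ∧ W ≠ B := by
  by_cases hXA : X = A
  · by_cases hYB : Y = B
    · exact ⟨Z, hZ, fun h => hXZ (hXA.trans h.symm), fun h => hYZ (hYB.trans h.symm)⟩
    · exact ⟨Y, hY, fun h => hXY (hXA.trans h.symm), hYB⟩
  by_cases hXB : X = B
  · by_cases hYA : Y = A
    · exact ⟨Z, hZ, fun h => hYZ (hYA.trans h.symm), fun h => hXZ (hXB.trans h.symm)⟩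
    · exact ⟨Y, hY, hYA, fun h => hXY (hXB.trans h.symm)⟩
  exact ⟨X, hX, hXA, hXB⟩

lemma exists_two_on (h6 : LinesHaveAtLeast P L 6) (l : L) (c : P) :
    ∃ A B : P, A ∈ l ∧ B ∈ l ∧ A ≠ B ∧ A ≠ c ∧ B ≠ c := by
  classical
  obtain ⟨s, hcard, hs⟩ := h6 l
  have h2 : 1 < (s.erase c).card := by
    have := Finset.pred_card_le_card_erase (s := s) (a := c)
    omega
  obtain ⟨A, hA, B, hB, hAB⟩ := Finset.one_lt_card.mp h2
  exact ⟨A, B, hs A (Finset.mem_of_mem_erase hA), hs B (Finset.mem_of_mem_erase hB), hAB,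
    Finset.ne_of_mem_erase hA, Finset.ne_of_mem_erase hB⟩

/-- A projectivity between two distinct ranges which fixes their common point is a
perspectivity. -/
theorem persp_criterion (h6 : LinesHaveAtLeast P L 6) (hT : AxiomT P L)
    {l m : L} (hlm : l ≠ m) {f : {X : P // X ∈ l} → {Y : P // Y ∈ m}}
    (hf : IsProj P L (.range l) (.range m) f)
    {c : P} (hcl : c ∈ l) (hcm : c ∈ m) (hfc : ((f ⟨c, hcl⟩ : P)) = c) :
    ∃ O : P, O ∉ l ∧ O ∉ m ∧
      ∀ X : {X : P // X ∈ l}, ∃ k : L, O ∈ k ∧ (X : P) ∈ k ∧ ((f X : P)) ∈ k := by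
  have hinj : Function.Injective f := proj_injective hf
  obtain ⟨A, B, hAl, hBl, hAB, hAc, hBc⟩ := exists_two_on h6 l c
  -- images are off `l`
  have hmainA : ((f ⟨A, hAl⟩ : P)) ∉ l := by
    intro hmem
    have : ((f ⟨A, hAl⟩ : P)) = c := uniq_pt hlm hmem (f _).2 hcl hcm
    have : f ⟨A, hAl⟩ = f ⟨c, hcl⟩ := by
      apply Subtype.ext; rw [this, hfc]
    exact hAc (congrArg Subtype.val (hinj this))
  have hmainB : ((f ⟨B, hBl⟩ : P)) ∉ l := by
    intro hmem
    have : ((f ⟨B, hBl⟩ : P)) = c := uniq_pt hlm hmem (f _).2 hcl hcm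
    have : f ⟨B, hBl⟩ = f ⟨c, hcl⟩ := by
      apply Subtype.ext; rw [this, hfc]
    exact hBc (congrArg Subtype.val (hinj this))
  have hAfA : A ≠ ((f ⟨A, hAl⟩ : P)) := fun h => hmainA (h ▸ hAl)
  have hBfB : B ≠ ((f ⟨B, hBl⟩ : P)) := fun h => hmainB (h ▸ hBl)
  have haxA := Configuration.HasLines.mkLine_ax (L := L) hAfA
  have haxB := Configuration.HasLines.mkLine_ax (L := L) hBfB
  have hnAl : Configuration.HasLines.mkLine (L := L) hAfA ≠ l := ne_ln_of_mem haxA.2 hmainA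
  have hnBl : Configuration.HasLines.mkLine (L := L) hBfB ≠ l := ne_ln_of_mem haxB.2 hmainB
  -- A ∉ m, B ∉ m
  have hAm : A ∉ m := fun h => hAc (uniq_pt hlm hAl h hcl hcm)
  have hBm : B ∉ m := fun h => hBc (uniq_pt hlm hBl h hcl hcm)
  have hnAm : Configuration.HasLines.mkLine (L := L) hAfA ≠ m := ne_ln_of_mem haxA.1 hAm
  have hnBm : Configuration.HasLines.mkLine (L := L) hBfB ≠ m := ne_ln_of_mem haxB.1 hBm
  have hnAB : Configuration.HasLines.mkLine (L := L) hAfA ≠ Configuration.HasLines.mkLine (L := L) hBfB := by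
    intro h
    have hBnA : B ∈ Configuration.HasLines.mkLine (L := L) hAfA := h ▸ haxB.1
    have : Configuration.HasLines.mkLine (L := L) hAfA = l := uniq_ln hAB haxA.1 hBnA hAl hBl
    exact hnAl this
  have haxO := Configuration.HasPoints.mkPoint_ax (P := P) hnAB
  generalize hOdef : Configuration.HasPoints.mkPoint (P := P) hnAB = O at haxO
  have hOl : O ∉ l := by
    intro h
    have h1 : O = A := uniq_pt hnAl haxO.1 h haxA.1 hAl
    have h2 : O = B := uniq_pt hnBl haxO.2 h haxB.1 hBl
    exact hAB (h1 ▸ h2)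
  have hOm : O ∉ m := by
    intro h
    have h1 : O = ((f ⟨A, hAl⟩ : P)) := uniq_pt hnAm haxO.1 h haxA.2 (f _).2
    have h2 : O = ((f ⟨B, hBl⟩ : P)) := uniq_pt hnBm haxO.2 h haxB.2 (f _).2
    have : f ⟨A, hAl⟩ = f ⟨B, hBl⟩ := Subtype.ext (h1 ▸ h2)
    exact hAB (congrArg Subtype.val (hinj this))
  -- the backwards perspectivity
  have hσ : IsProj P L (.range l) (.range l) ((perspMap hOm hOl) ∘ f) :=
    .comp hf (.persp (isPersp hOm hOl))
  have hfix : ∀ w, ((perspMap hOm hOl) ∘ f) w = w := by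
    apply hT _ _ hσ
    refine ⟨⟨A, hAl⟩, ⟨B, hBl⟩, ⟨c, hcl⟩, ?_, ?_, ?_, ?_, ?_, ?_⟩
    · exact fun h => hAB (congrArg Subtype.val h)
    · exact fun h => hAc (congrArg Subtype.val h)
    · exact fun h => hBc (congrArg Subtype.val h)
    · exact persp_eq hOm hOl (f ⟨A, hAl⟩) hAl haxO.1 haxA.2 haxA.1
    · exact persp_eq hOm hOl (f ⟨B, hBl⟩) hBl haxO.2 haxB.2 haxB.1
    · have hOc : O ≠ c := ne_pt_of_mem hOl hcl
      have haxc := Configuration.HasLines.mkLine_ax (L := L) hOc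
      have hfcm : f ⟨c, hcl⟩ = ⟨c, hcm⟩ := Subtype.ext hfc
      show perspMap hOm hOl (f ⟨c, hcl⟩) = ⟨c, hcl⟩
      rw [hfcm]
      exact persp_eq hOm hOl ⟨c, hcm⟩ hcl haxc.1 haxc.2 haxc.2
  refine ⟨O, hOl, hOm, fun X => ?_⟩
  obtain ⟨k, hOk, hfXk, hgk⟩ := perspMap_spec hOm hOl (f X)
  have h2 : perspMap hOm hOl (f X) = X := hfix X
  rw [h2] at hgk
  exact ⟨k, hOk, hgk, hfXk⟩

/-! ### Properties of the Steiner conic -/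

section Conic

variable {U V : P} {π : {k : L // U ∈ k} → {k : L // V ∈ k}}

lemma conic_val (hUV : U ≠ V) {X : P} (hX : X ∈ conicSet P L U V π) (hXU : X ≠ U)
    (k : {k : L // U ∈ k}) (hXk : X ∈ (k : L)) : X ∈ ((π k : L)) := by
  obtain ⟨k₀, hXk₀, hXπ⟩ := hX
  have : (k₀ : L) = (k : L) := uniq_ln hXU.symm k₀.2 hXk₀ k.2 hXk
  have hk : k₀ = k := Subtype.ext this
  rwa [hk] at hXπ

lemma conic_val' (hUV : U ≠ V) {X : P} (hX : X ∈ conicSet P L U V π) (hXU : X ≠ U)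
    (hXV : X ≠ V) (k : {k : L // U ∈ k}) (hXk : X ∈ (k : L)) {n : L} (hVn : V ∈ n)
    (hXn : X ∈ n) : ((π k : L)) = n :=
  uniq_ln hXV.symm (π k).2 (conic_val hUV hX hXU k hXk) hVn hXn

lemma mem_conic_left (hUV : U ≠ V) (hπ : IsProj P L (.pencil U) (.pencil V) π) :
    U ∈ conicSet P L U V π := by
  obtain ⟨g, _, _, hr⟩ := proj_inv hπ
  have hax := Configuration.HasLines.mkLine_ax (L := L) hUV
  refine ⟨g ⟨Configuration.HasLines.mkLine hUV, hax.2⟩, (g _).2, ?_⟩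
  rw [hr]
  exact hax.1

lemma mem_conic_right (hUV : U ≠ V) : V ∈ conicSet P L U V π := by
  have hax := Configuration.HasLines.mkLine_ax (L := L) hUV
  exact ⟨⟨Configuration.HasLines.mkLine hUV, hax.1⟩, hax.2, (π _).2⟩

lemma good_base (hUV : U ≠ V) (hπ : IsProj P L (.pencil U) (.pencil V) π) :
    GoodPair L (conicSet P L U V π) U V :=
  ⟨hUV, π, hπ, fun X hX hXU _ k hk => conic_val hUV hX hXU k hk⟩

theorem secant_conic (hUV : U ≠ V) (hπ : IsProj P L (.pencil U) (.pencil V) π)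
    (hnp : ∀ k : {k : L // U ∈ k}, ((π k : L)) ≠ (k : L)) (hT : AxiomT P L) :
    SecantProp L (conicSet P L U V π) := by
  intro s X hX Y hY Z hZ hXs hYs hZs
  by_contra hc
  push_neg at hc
  obtain ⟨hXY, hXZ, hYZ⟩ := hc
  by_cases hUs : U ∈ s
  · -- two of the points differ from U; both lie on π ⟨s⟩, forcing π ⟨s⟩ = s
    have hQ : ∀ W, (W ∈ conicSet P L U V π ∧ W ∈ s) → (W ∈ conicSet P L U V π ∧ W ∈ s) :=
      fun _ h => h
    obtain ⟨W₁, W₂, hW₁, hW₂, h12, h1U, h2U⟩ :=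
      pick_two (Q := fun W => W ∈ conicSet P L U V π ∧ W ∈ s) (A := U)
        ⟨hX, hXs⟩ ⟨hY, hYs⟩ ⟨hZ, hZs⟩ hXY hXZ hYZ
    have hp1 : W₁ ∈ ((π ⟨s, hUs⟩ : L)) := conic_val hUV hW₁.1 h1U ⟨s, hUs⟩ hW₁.2
    have hp2 : W₂ ∈ ((π ⟨s, hUs⟩ : L)) := conic_val hUV hW₂.1 h2U ⟨s, hUs⟩ hW₂.2
    exact hnp ⟨s, hUs⟩ (uniq_ln h12 hp1 hp2 hW₁.2 hW₂.2)
  · by_cases hVs : V ∈ s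
    · -- two of the points differ from V, and π is injective
      obtain ⟨W₁, W₂, hW₁, hW₂, h12, h1V, h2V⟩ :=
        pick_two (Q := fun W => W ∈ conicSet P L U V π ∧ W ∈ s) (A := V)
          ⟨hX, hXs⟩ ⟨hY, hYs⟩ ⟨hZ, hZs⟩ hXY hXZ hYZ
      have h1U : U ≠ W₁ := ne_pt_of_mem hUs hW₁.2
      have h2U : U ≠ W₂ := ne_pt_of_mem hUs hW₂.2
      have hax1 := Configuration.HasLines.mkLine_ax (L := L) h1U
      have hax2 := Configuration.HasLines.mkLine_ax (L := L) h2U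
      have he1 : ((π ⟨_, hax1.1⟩ : L)) = s :=
        conic_val' hUV hW₁.1 h1U.symm h1V ⟨_, hax1.1⟩ hax1.2 hVs hW₁.2
      have he2 : ((π ⟨_, hax2.1⟩ : L)) = s :=
        conic_val' hUV hW₂.1 h2U.symm h2V ⟨_, hax2.1⟩ hax2.2 hVs hW₂.2
      have : (⟨_, hax1.1⟩ : {k : L // U ∈ k}) = ⟨_, hax2.1⟩ :=
        proj_injective hπ (Subtype.ext (he1.trans he2.symm))
      have hlines : Configuration.HasLines.mkLine (L := L) h1U =
          Configuration.HasLines.mkLine (L := L) h2U := congrArg Subtype.val this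
      have hW2mem : W₂ ∈ Configuration.HasLines.mkLine (L := L) h1U := hlines ▸ hax2.2
      have : Configuration.HasLines.mkLine (L := L) h1U = s :=
        uniq_ln h12 hax1.2 hW2mem hW₁.2 hW₂.2
      exact hUs (this ▸ hax1.1)
    · -- both centres off `s` : use Axiom T
      have hσ : IsProj P L (.range s) (.range s)
          ((elemMap hVs) ∘ (π ∘ (elemInvMap hUs))) :=
        .comp (.comp (.elemInv (isElemInv hUs)) hπ) (.elem (isElem hVs))
      have hfixpt : ∀ (W : P) (hW : W ∈ conicSet P L U V π) (hWs : W ∈ s),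
          ((elemMap hVs) ∘ (π ∘ (elemInvMap hUs))) ⟨W, hWs⟩ = ⟨W, hWs⟩ := by
        intro W hW hWs
        have hWU : W ≠ U := (ne_pt_of_mem hUs hWs).symm
        have hπW : W ∈ ((π (elemInvMap hUs ⟨W, hWs⟩) : L)) :=
          conic_val hUV hW hWU _ (elemInvMap_spec hUs ⟨W, hWs⟩)
        exact elem_eq hVs _ hπW hWs
      have hid : ∀ w, ((elemMap hVs) ∘ (π ∘ (elemInvMap hUs))) w = w := by
        apply hT _ _ hσ
        exact ⟨⟨X, hXs⟩, ⟨Y, hYs⟩, ⟨Z, hZs⟩,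
          fun h => hXY (congrArg Subtype.val h), fun h => hXZ (congrArg Subtype.val h),
          fun h => hYZ (congrArg Subtype.val h),
          hfixpt X hX hXs, hfixpt Y hY hYs, hfixpt Z hZ hZs⟩
      -- now evaluate at the intersection of `UV` with `s`
      have haxuv := Configuration.HasLines.mkLine_ax (L := L) hUV
      have htS : Configuration.HasLines.mkLine (L := L) hUV ≠ s := ne_ln_of_mem haxuv.1 hUs
      have haxW := Configuration.HasPoints.mkPoint_ax (P := P) htS
      generalize hW₀def : Configuration.HasPoints.mkPoint (P := P) htS = W₀ at haxW
      have hW₀s : W₀ ∈ s := haxW.2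
      have hUW₀ : U ≠ W₀ := ne_pt_of_mem hUs hW₀s
      have hkval : ((elemInvMap hUs ⟨W₀, hW₀s⟩ : L)) = Configuration.HasLines.mkLine hUV :=
        uniq_ln hUW₀ (elemInvMap hUs ⟨W₀, hW₀s⟩).2 (elemInvMap_spec hUs ⟨W₀, hW₀s⟩)
          haxuv.1 haxW.1
      have hW₀fix := hid ⟨W₀, hW₀s⟩
      have hW₀π : W₀ ∈ ((π (elemInvMap hUs ⟨W₀, hW₀s⟩) : L)) := by
        have := congrArg Subtype.val hW₀fix
        have hspec := elemMap_spec hVs (π (elemInvMap hUs ⟨W₀, hW₀s⟩))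
        rw [show ((elemMap hVs (π (elemInvMap hUs ⟨W₀, hW₀s⟩)) : P)) = W₀ from this] at hspec
        exact hspec
      have hVW₀ : V ≠ W₀ := ne_pt_of_mem hVs hW₀s
      have : ((π (elemInvMap hUs ⟨W₀, hW₀s⟩) : L)) = Configuration.HasLines.mkLine hUV :=
        uniq_ln hVW₀ (π _).2 hW₀π haxuv.2 haxW.1
      exact hnp _ (this.trans hkval.symm)

/-- A plentiful supply of points on the conic. -/
theorem conic_spare (hUV : U ≠ V) (hπ : IsProj P L (.pencil U) (.pencil V) π)
    (hnp : ∀ k : {k : L // U ∈ k}, ((π k : L)) ≠ (k : L)) (h6 : LinesHaveAtLeast P L 6)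
    (W₁ W₂ W₃ : P) :
    ∃ R T, R ∈ conicSet P L U V π ∧ T ∈ conicSet P L U V π ∧ R ≠ T ∧
      R ≠ W₁ ∧ R ≠ W₂ ∧ R ≠ W₃ ∧ T ≠ W₁ ∧ T ≠ W₂ ∧ T ≠ W₃ := by
  classical
  obtain ⟨l₀, hUl₀⟩ := Configuration.Nondegenerate.exists_line (P := P) (L := L) U
  obtain ⟨s, hcard, hmem⟩ := h6 l₀
  -- the point of the conic on the line `UQ`
  let c : P → P := fun Q =>
    if h : U ≠ Q then
      Configuration.HasPoints.mkPoint (P := P)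
        (hnp ⟨Configuration.HasLines.mkLine h, (Configuration.HasLines.mkLine_ax h).1⟩)
    else U
  have hcspec : ∀ (Q : P) (h : U ≠ Q),
      c Q ∈ ((π ⟨Configuration.HasLines.mkLine h,
        (Configuration.HasLines.mkLine_ax h).1⟩ : L)) ∧
      c Q ∈ Configuration.HasLines.mkLine (L := L) h := by
    intro Q h
    have : c Q = Configuration.HasPoints.mkPoint (P := P)
        (hnp ⟨Configuration.HasLines.mkLine h, (Configuration.HasLines.mkLine_ax h).1⟩) :=
      dif_pos h
    rw [this]
    exact Configuration.HasPoints.mkPoint_ax _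
  have hconic : ∀ Q ∈ s, c Q ∈ conicSet P L U V π := by
    intro Q hQ
    have h : U ≠ Q := ne_pt_of_mem hUl₀ (hmem Q hQ)
    exact ⟨_, (hcspec Q h).2, (hcspec Q h).1⟩
  have hinj : ∀ Q ∈ s, ∀ Q' ∈ s, c Q = c Q' → Q = Q' := by
    intro Q hQ Q' hQ' hc
    have h : U ≠ Q := ne_pt_of_mem hUl₀ (hmem Q hQ)
    have h' : U ≠ Q' := ne_pt_of_mem hUl₀ (hmem Q' hQ')
    have hax := Configuration.HasLines.mkLine_ax (L := L) h
    have hax' := Configuration.HasLines.mkLine_ax (L := L) h'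
    have hkk : Configuration.HasLines.mkLine (L := L) h =
        Configuration.HasLines.mkLine (L := L) h' := by
      by_cases hXU : c Q = U
      · -- both lines map to `UV` under the injective `π`
        have e1 : ((π ⟨_, hax.1⟩ : L)) = Configuration.HasLines.mkLine hUV := by
          refine uniq_ln hUV ?_ (π _).2 (Configuration.HasLines.mkLine_ax hUV).1
            (Configuration.HasLines.mkLine_ax hUV).2
          have hh := (hcspec Q h).1
          rwa [hXU] at hh
        have e2 : ((π ⟨_, hax'.1⟩ : L)) = Configuration.HasLines.mkLine hUV := by
          refine uniq_ln hUV ?_ (π _).2 (Configuration.HasLines.mkLine_ax hUV).1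
            (Configuration.HasLines.mkLine_ax hUV).2
          have hh := (hcspec Q' h').1
          rw [← hc] at hh
          rwa [hXU] at hh
        have : (⟨_, hax.1⟩ : {k : L // U ∈ k}) = ⟨_, hax'.1⟩ :=
          proj_injective hπ (Subtype.ext (e1.trans e2.symm))
        exact congrArg Subtype.val this
      · have hm1 : c Q ∈ Configuration.HasLines.mkLine (L := L) h := (hcspec Q h).2
        have hm2 : c Q ∈ Configuration.HasLines.mkLine (L := L) h' := by
          rw [hc]; exact (hcspec Q' h').2
        exact uniq_ln (Ne.symm hXU) hax.1 hm1 hax'.1 hm2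
    have hQm : Q ∈ Configuration.HasLines.mkLine (L := L) h' := hkk ▸ hax.2
    have hll : Configuration.HasLines.mkLine (L := L) h' ≠ l₀ := ne_ln_of_mem hax'.1 hUl₀
    exact uniq_pt hll hQm (hmem Q hQ) hax'.2 (hmem Q' hQ')
  -- remove the at most four bad values
  set bad : Finset P := {U, W₁, W₂, W₃} with hbad
  have hfilter := Finset.card_filter_add_card_filter_not
    (s := s) (p := fun Q => c Q ∈ bad)
  have hbadcard : (s.filter (fun Q => c Q ∈ bad)).card ≤ 4 := by
    have hle : (s.filter (fun Q => c Q ∈ bad)).card ≤ bad.card := by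
      apply Finset.card_le_card_of_injOn c
      · intro Q hQ
        exact (Finset.mem_filter.mp hQ).2
      · intro Q hQ Q' hQ' hcc
        exact hinj Q (Finset.mem_filter.mp hQ).1 Q' (Finset.mem_filter.mp hQ').1 hcc
    have : bad.card ≤ 4 := by
      rw [hbad]
      apply le_trans (Finset.card_insert_le _ _)
      have : ({W₁, W₂, W₃} : Finset P).card ≤ 3 := by
        apply le_trans (Finset.card_insert_le _ _)
        have : ({W₂, W₃} : Finset P).card ≤ 2 := by
          apply le_trans (Finset.card_insert_le _ _)
          simp
        omega
      omega
    omega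
  have hgoodcard : 1 < (s.filter (fun Q => ¬ c Q ∈ bad)).card := by omega
  obtain ⟨QR, hQR, QT, hQT, hne⟩ := Finset.one_lt_card.mp hgoodcard
  have hQRs := (Finset.mem_filter.mp hQR).1
  have hQTs := (Finset.mem_filter.mp hQT).1
  have hQRbad := (Finset.mem_filter.mp hQR).2
  have hQTbad := (Finset.mem_filter.mp hQT).2
  simp only [hbad, Finset.mem_insert, Finset.mem_singleton, not_or] at hQRbad hQTbad
  refine ⟨c QR, c QT, hconic QR hQRs, hconic QT hQTs, ?_, hQRbad.2.1, hQRbad.2.2.1,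
    hQRbad.2.2.2, hQTbad.2.1, hQTbad.2.2.1, hQTbad.2.2.2⟩
  intro h
  exact hne (hinj QR hQRs QT hQTs h)

end Conic

/-- **Pascal's theorem for a hexagon whose second and sixth vertices form a good pair.** -/
theorem specialPascal {κ : Set P} (h6 : LinesHaveAtLeast P L 6) (hT : AxiomT P L)
    (hsec : SecantProp L κ)
    {P₁ P₂ P₃ P₄ P₅ P₆ : P}
    (h1κ : P₁ ∈ κ) (h2κ : P₂ ∈ κ) (h3κ : P₃ ∈ κ) (h4κ : P₄ ∈ κ) (h5κ : P₅ ∈ κ) (h6κ : P₆ ∈ κ)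
    (hd12 : P₁ ≠ P₂) (hd13 : P₁ ≠ P₃) (hd14 : P₁ ≠ P₄) (hd15 : P₁ ≠ P₅) (hd16 : P₁ ≠ P₆)
    (hd23 : P₂ ≠ P₃) (hd24 : P₂ ≠ P₄) (hd25 : P₂ ≠ P₅) (hd26 : P₂ ≠ P₆)
    (hd34 : P₃ ≠ P₄) (hd35 : P₃ ≠ P₅) (hd36 : P₃ ≠ P₆)
    (hd45 : P₄ ≠ P₅) (hd46 : P₄ ≠ P₆) (hd56 : P₅ ≠ P₆)
    (hG : GoodPair L κ P₂ P₆)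
    {l₁ l₂ l₃ l₄ l₅ l₆ : L}
    (m11 : P₁ ∈ l₁) (m21 : P₂ ∈ l₁) (m22 : P₂ ∈ l₂) (m32 : P₃ ∈ l₂) (m33 : P₃ ∈ l₃)
    (m43 : P₄ ∈ l₃) (m44 : P₄ ∈ l₄) (m54 : P₅ ∈ l₄) (m55 : P₅ ∈ l₅) (m65 : P₆ ∈ l₅)
    (m66 : P₆ ∈ l₆) (m16 : P₁ ∈ l₆)
    {X Y Z : P} (hX1 : X ∈ l₁) (hX4 : X ∈ l₄) (hY2 : Y ∈ l₂) (hY5 : Y ∈ l₅)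
    (hZ3 : Z ∈ l₃) (hZ6 : Z ∈ l₆) : Col P L X Y Z := by
  obtain ⟨-, φ, hφproj, hφval⟩ := hG
  -- nonincidence facts
  have n2l4 : P₂ ∉ l₄ := notMem_side hsec h2κ h4κ h5κ hd24 hd25 hd45 m44 m54
  have n6l3 : P₆ ∉ l₃ := notMem_side hsec h6κ h3κ h4κ hd36.symm hd46.symm hd34 m33 m43
  have n5l3 : P₅ ∉ l₃ := notMem_side hsec h5κ h3κ h4κ hd35.symm hd45.symm hd34 m33 m43
  have n3l4 : P₃ ∉ l₄ := notMem_side hsec h3κ h4κ h5κ hd34 hd35 hd45 m44 m54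
  have n2l5 : P₂ ∉ l₅ := notMem_side hsec h2κ h5κ h6κ hd25 hd26 hd56 m55 m65
  have hl43 : l₄ ≠ l₃ := fun h => n5l3 (h ▸ m54)
  have hl24 : l₂ ≠ l₄ := fun h => n2l4 (h ▸ m22)
  have hl25 : l₂ ≠ l₅ := fun h => n2l5 (h ▸ m22)
  -- the projectivity from the range of l₄ to the range of l₃
  have hψ : IsProj P L (.range l₄) (.range l₃)
      ((elemMap n6l3) ∘ (φ ∘ (elemInvMap n2l4))) :=
    .comp (.comp (.elemInv (isElemInv n2l4)) hφproj) (.elem (isElem n6l3))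
  -- it fixes the common point P₄
  have hφ4 : P₄ ∈ ((φ (elemInvMap n2l4 ⟨P₄, m44⟩) : L)) :=
    hφval P₄ h4κ hd24.symm hd46 _ (elemInvMap_spec n2l4 ⟨P₄, m44⟩)
  have hfix4 : ((elemMap n6l3) ∘ (φ ∘ (elemInvMap n2l4))) ⟨P₄, m44⟩ = ⟨P₄, m43⟩ :=
    elem_eq n6l3 _ hφ4 m43
  obtain ⟨O, hOl4, hOl3, hcol⟩ :=
    persp_criterion h6 hT hl43 hψ m44 m43 (congrArg Subtype.val hfix4)
  -- value at X : the opposite point Z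
  have hψX : ((elemMap n6l3) ∘ (φ ∘ (elemInvMap n2l4))) ⟨X, hX4⟩ = ⟨Z, hZ3⟩ := by
    have h2X : P₂ ≠ X := ne_pt_of_mem n2l4 hX4
    have hkl1 : ((elemInvMap n2l4 ⟨X, hX4⟩ : L)) = l₁ :=
      uniq_ln h2X (elemInvMap n2l4 ⟨X, hX4⟩).2 (elemInvMap_spec n2l4 ⟨X, hX4⟩) m21 hX1
    have hP₁k : P₁ ∈ ((elemInvMap n2l4 ⟨X, hX4⟩ : L)) := by rw [hkl1]; exact m11
    have hφ1 : P₁ ∈ ((φ (elemInvMap n2l4 ⟨X, hX4⟩) : L)) :=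
      hφval P₁ h1κ hd12 hd16 _ hP₁k
    have hval6 : ((φ (elemInvMap n2l4 ⟨X, hX4⟩) : L)) = l₆ :=
      uniq_ln hd16.symm (φ _).2 hφ1 m66 m16
    have hZφ : Z ∈ ((φ (elemInvMap n2l4 ⟨X, hX4⟩) : L)) := by rw [hval6]; exact hZ6
    exact elem_eq n6l3 _ hZφ hZ3
  obtain ⟨k₀, hOk₀, hXk₀, hfXk₀⟩ := hcol ⟨X, hX4⟩
  rw [hψX] at hfXk₀
  -- O lies on l₅
  have hOl5 : O ∈ l₅ := by
    have hφ5 : P₅ ∈ ((φ (elemInvMap n2l4 ⟨P₅, m54⟩) : L)) :=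
      hφval P₅ h5κ hd25.symm hd56 _ (elemInvMap_spec n2l4 ⟨P₅, m54⟩)
    have hval5 : ((φ (elemInvMap n2l4 ⟨P₅, m54⟩) : L)) = l₅ :=
      uniq_ln hd56.symm (φ _).2 hφ5 m65 m55
    have hS5 : ((((elemMap n6l3) ∘ (φ ∘ (elemInvMap n2l4))) ⟨P₅, m54⟩ : P)) ∈ l₅ := by
      have hspec := elemMap_spec n6l3 (φ (elemInvMap n2l4 ⟨P₅, m54⟩))
      rw [hval5] at hspec
      exact hspec
    obtain ⟨k', hOk', hP₅k', hSk'⟩ := hcol ⟨P₅, m54⟩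
    have hP₅S : P₅ ≠ ((((elemMap n6l3) ∘ (φ ∘ (elemInvMap n2l4))) ⟨P₅, m54⟩ : P)) := by
      intro h
      exact n5l3 (h ▸ (((elemMap n6l3) ∘ (φ ∘ (elemInvMap n2l4))) ⟨P₅, m54⟩).2)
    have : k' = l₅ := uniq_ln hP₅S hP₅k' hSk' m55 hS5
    rw [← this]
    exact hOk'
  -- O lies on l₂
  have haxM := Configuration.HasPoints.mkPoint_ax (P := P) hl24
  generalize hMdef : Configuration.HasPoints.mkPoint (P := P) hl24 = M at haxM
  have hOl2 : O ∈ l₂ := by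
    have h2M : P₂ ≠ M := ne_pt_of_mem n2l4 haxM.2
    have hkl2 : ((elemInvMap n2l4 ⟨M, haxM.2⟩ : L)) = l₂ :=
      uniq_ln h2M (elemInvMap n2l4 ⟨M, haxM.2⟩).2 (elemInvMap_spec n2l4 ⟨M, haxM.2⟩)
        m22 haxM.1
    have hP₃k : P₃ ∈ ((elemInvMap n2l4 ⟨M, haxM.2⟩ : L)) := by rw [hkl2]; exact m32
    have hφ3 : P₃ ∈ ((φ (elemInvMap n2l4 ⟨M, haxM.2⟩) : L)) :=
      hφval P₃ h3κ hd23.symm hd36 _ hP₃k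
    have hψM : ((elemMap n6l3) ∘ (φ ∘ (elemInvMap n2l4))) ⟨M, haxM.2⟩ = ⟨P₃, m33⟩ :=
      elem_eq n6l3 _ hφ3 m33
    obtain ⟨k'', hOk'', hMk'', hP₃k''⟩ := hcol ⟨M, haxM.2⟩
    rw [hψM] at hP₃k''
    have hMP₃ : M ≠ P₃ := fun h => n3l4 (h ▸ haxM.2)
    have : k'' = l₂ := uniq_ln hMP₃ hMk'' hP₃k'' haxM.1 m32
    rw [← this]
    exact hOk''
  have hYO : Y = O := uniq_pt hl25 hY2 hY5 hOl2 hOl5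
  exact ⟨k₀, hXk₀, hYO ▸ hOk₀, hfXk₀⟩

theorem good_symm {κ : Set P} {U V : P} (hG : GoodPair L κ U V) : GoodPair L κ V U := by
  obtain ⟨hUV, φ, hφproj, hφval⟩ := hG
  obtain ⟨g, hgproj, hgl, hgr⟩ := proj_inv hφproj
  refine ⟨hUV.symm, g, hgproj, ?_⟩
  intro X hX hXV hXU k hXk
  have hUX : U ≠ X := Ne.symm hXU
  have hax := Configuration.HasLines.mkLine_ax (L := L) hUX
  have hφm : X ∈ ((φ ⟨Configuration.HasLines.mkLine hUX, hax.1⟩ : L)) :=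
    hφval X hX hXU hXV _ hax.2
  have heq : φ ⟨Configuration.HasLines.mkLine hUX, hax.1⟩ = k :=
    Subtype.ext (uniq_ln (Ne.symm hXV) (φ _).2 hφm k.2 hXk)
  have : g k = ⟨Configuration.HasLines.mkLine hUX, hax.1⟩ := by rw [← heq, hgl]
  rw [this]
  exact hax.2

/-- Base change: one step, keeping the first base point. -/
theorem good_step {κ : Set P} (h6 : LinesHaveAtLeast P L 6) (hT : AxiomT P L)
    (hsec : SecantProp L κ)
    (hsp : ∀ W₁ W₂ W₃ : P, ∃ R T, R ∈ κ ∧ T ∈ κ ∧ R ≠ T ∧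
      R ≠ W₁ ∧ R ≠ W₂ ∧ R ≠ W₃ ∧ T ≠ W₁ ∧ T ≠ W₂ ∧ T ≠ W₃)
    {U V A : P} (hUκ : U ∈ κ) (hVκ : V ∈ κ) (hAκ : A ∈ κ) (hAU : A ≠ U) (hAV : A ≠ V)
    (hG : GoodPair L κ U V) : GoodPair L κ U A := by
  have hUV : U ≠ V := hG.1
  obtain ⟨R, T, hRκ, hTκ, hRT, hRU, hRV, hRA, hTU, hTV, hTA⟩ := hsp U V A
  have hAT : A ≠ T := Ne.symm hTA
  have hRVne : R ≠ V := hRV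
  have hVT : V ≠ T := Ne.symm hTV
  have hUT : U ≠ T := Ne.symm hTU
  have hAR : A ≠ R := Ne.symm hRA
  have haxm₁ := Configuration.HasLines.mkLine_ax (L := L) hRVne
  have haxm₂ := Configuration.HasLines.mkLine_ax (L := L) hVT
  have haxe₁ := Configuration.HasLines.mkLine_ax (L := L) hUT
  have haxe₂ := Configuration.HasLines.mkLine_ax (L := L) hAR
  -- nonincidences
  have nAe₁ : A ∉ Configuration.HasLines.mkLine (L := L) hUT :=
    notMem_side hsec hAκ hUκ hTκ hAU hAT hUT haxe₁.1 haxe₁.2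
  have nRe₁ : R ∉ Configuration.HasLines.mkLine (L := L) hUT :=
    notMem_side hsec hRκ hUκ hTκ hRU hRT hUT haxe₁.1 haxe₁.2
  have nTe₂ : T ∉ Configuration.HasLines.mkLine (L := L) hAR :=
    notMem_side hsec hTκ hAκ hRκ hTA (Ne.symm hRT) hAR haxe₂.1 haxe₂.2
  have nUm₁ : U ∉ Configuration.HasLines.mkLine (L := L) hRVne :=
    notMem_side hsec hUκ hRκ hVκ (Ne.symm hRU) hUV (Ne.symm hRV).symm haxm₁.1 haxm₁.2
  have nAm₁ : A ∉ Configuration.HasLines.mkLine (L := L) hRVne :=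
    notMem_side hsec hAκ hRκ hVκ hAR hAV hRV haxm₁.1 haxm₁.2
  have nAm₂ : A ∉ Configuration.HasLines.mkLine (L := L) hVT :=
    notMem_side hsec hAκ hVκ hTκ hAV hAT hVT haxm₂.1 haxm₂.2
  have nUm₂ : U ∉ Configuration.HasLines.mkLine (L := L) hVT :=
    notMem_side hsec hUκ hVκ hTκ hUV hUT hVT haxm₂.1 haxm₂.2
  -- the centre O of the auxiliary perspectivity
  have hne : Configuration.HasLines.mkLine (L := L) hUT ≠
      Configuration.HasLines.mkLine (L := L) hAR := by
    intro h
    exact nAe₁ (h ▸ haxe₂.1)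
  have haxO := Configuration.HasPoints.mkPoint_ax (P := P) hne
  generalize hOdef : Configuration.HasPoints.mkPoint (P := P) hne = O at haxO
  have nOm₁ : O ∉ Configuration.HasLines.mkLine (L := L) hRVne := by
    intro h
    have he₂m₁ : Configuration.HasLines.mkLine (L := L) hAR ≠
        Configuration.HasLines.mkLine (L := L) hRVne := fun hh => nAm₁ (hh ▸ haxe₂.1)
    have : O = R := uniq_pt he₂m₁ haxO.2 h haxe₂.2 haxm₁.1
    exact nRe₁ (this ▸ haxO.1)
  have nOm₂ : O ∉ Configuration.HasLines.mkLine (L := L) hVT := by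
    intro h
    have he₁m₂ : Configuration.HasLines.mkLine (L := L) hUT ≠
        Configuration.HasLines.mkLine (L := L) hVT := fun hh => nUm₂ (hh ▸ haxe₁.1)
    have : O = T := uniq_pt he₁m₂ haxO.1 h haxe₁.2 haxm₂.2
    exact nTe₂ (this ▸ haxO.2)
  -- the projectivity U* → A*
  refine ⟨hAU.symm, (elemInvMap nAm₂) ∘ ((perspMap nOm₁ nOm₂) ∘ (elemMap nUm₁)),
    .comp (.comp (.elem (isElem nUm₁)) (.persp (isPersp nOm₁ nOm₂))) (.elemInv (isElemInv nAm₂)),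
    ?_⟩
  intro X hXκ hXU hXA k hXk
  -- it suffices to find a line through `A`, the image point, and `X`
  have finish : ∀ (Wf : {Y : P // Y ∈ Configuration.HasLines.mkLine (L := L) hVT})
      (hWf : perspMap nOm₁ nOm₂ (elemMap nUm₁ k) = Wf) (n : L) (hAn : A ∈ n)
      (hWn : (Wf : P) ∈ n) (hXn : X ∈ n),
      X ∈ (((elemInvMap nAm₂) ∘ ((perspMap nOm₁ nOm₂) ∘ (elemMap nUm₁))) k : L) := by
    intro Wf hWf n hAn hWn hXn
    show X ∈ ((elemInvMap nAm₂ (perspMap nOm₁ nOm₂ (elemMap nUm₁ k)) : L))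
    rw [hWf]
    have hAWf : A ≠ (Wf : P) := ne_pt_of_mem nAm₂ Wf.2
    have hval : ((elemInvMap nAm₂ Wf : L)) = n :=
      uniq_ln hAWf (elemInvMap nAm₂ Wf).2 (elemInvMap_spec nAm₂ Wf) hAn hWn
    rw [hval]
    exact hXn
  by_cases hXV : X = V
  · -- X = V
    have hVk : V ∈ (k : L) := hXV ▸ hXk
    have hW₁ : elemMap nUm₁ k = ⟨V, haxm₁.2⟩ := elem_eq nUm₁ k hVk haxm₁.2
    have hOV : O ≠ V := ne_pt_of_mem nOm₁ haxm₁.2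
    have haxOV := Configuration.HasLines.mkLine_ax (L := L) hOV
    have hW₂ : perspMap nOm₁ nOm₂ (elemMap nUm₁ k) = ⟨V, haxm₂.1⟩ := by
      rw [hW₁]
      exact persp_eq nOm₁ nOm₂ ⟨V, haxm₁.2⟩ haxm₂.1 haxOV.1 haxOV.2 haxOV.2
    have haxAV := Configuration.HasLines.mkLine_ax (L := L) hAV
    refine finish _ hW₂ (Configuration.HasLines.mkLine hAV) haxAV.1 haxAV.2 ?_
    rw [hXV]
    exact haxAV.2
  by_cases hXR : X = R
  · -- X = R
    have hRk : R ∈ (k : L) := hXR ▸ hXk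
    have hW₁ : elemMap nUm₁ k = ⟨R, haxm₁.1⟩ := elem_eq nUm₁ k hRk haxm₁.1
    have he₂m₂ : Configuration.HasLines.mkLine (L := L) hAR ≠
        Configuration.HasLines.mkLine (L := L) hVT := fun hh => nOm₂ (hh ▸ haxO.2)
    have haxQ := Configuration.HasPoints.mkPoint_ax (P := P) he₂m₂
    generalize hQdef : Configuration.HasPoints.mkPoint (P := P) he₂m₂ = Q at haxQ
    have hW₂ : perspMap nOm₁ nOm₂ (elemMap nUm₁ k) = ⟨Q, haxQ.2⟩ := by
      rw [hW₁]
      exact persp_eq nOm₁ nOm₂ ⟨R, haxm₁.1⟩ haxQ.2 haxO.2 haxe₂.2 haxQ.1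
    refine finish _ hW₂ (Configuration.HasLines.mkLine hAR) haxe₂.1 haxQ.1 ?_
    rw [hXR]
    exact haxe₂.2
  by_cases hXT : X = T
  · -- X = T
    have hTk : T ∈ (k : L) := hXT ▸ hXk
    have hkval : (k : L) = Configuration.HasLines.mkLine (L := L) hUT :=
      uniq_ln hUT k.2 hTk haxe₁.1 haxe₁.2
    have hW₁e₁ : ((elemMap nUm₁ k : P)) ∈ Configuration.HasLines.mkLine (L := L) hUT := by
      rw [← hkval]
      exact elemMap_spec nUm₁ k
    have hW₂ : perspMap nOm₁ nOm₂ (elemMap nUm₁ k) = ⟨T, haxm₂.2⟩ :=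
      persp_eq nOm₁ nOm₂ (elemMap nUm₁ k) haxm₂.2 haxO.1 hW₁e₁ haxe₁.2
    have haxAT := Configuration.HasLines.mkLine_ax (L := L) hAT
    refine finish _ hW₂ (Configuration.HasLines.mkLine hAT) haxAT.1 haxAT.2 ?_
    rw [hXT]
    exact haxAT.2
  -- the generic case, via the special Pascal theorem for the hexagon (T, U, X, A, R, V)
  have hXA' : X ≠ A := hXA
  have haxl₃ := Configuration.HasLines.mkLine_ax (L := L) hXA'
  have hl₃m₂ : Configuration.HasLines.mkLine (L := L) hXA' ≠
      Configuration.HasLines.mkLine (L := L) hVT := fun hh => nAm₂ (hh ▸ haxl₃.2)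
  have haxQ := Configuration.HasPoints.mkPoint_ax (P := P) hl₃m₂
  generalize hQdef : Configuration.HasPoints.mkPoint (P := P) hl₃m₂ = Q at haxQ
  have hCol : Col P L O ((elemMap nUm₁ k : P)) Q :=
    specialPascal h6 hT hsec hTκ hUκ hXκ hAκ hRκ hVκ
      hTU (Ne.symm hXT) hTA (Ne.symm hRT) hTV
      (Ne.symm hXU) (Ne.symm hAU) (Ne.symm hRU) hUV
      hXA hXR hXV hAR hAV hRV
      hG haxe₁.2 haxe₁.1 k.2 hXk haxl₃.1 haxl₃.2 haxe₂.1 haxe₂.2 haxm₁.1 haxm₁.2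
      haxm₂.1 haxm₂.2 haxO.1 haxO.2 (elemMap_spec nUm₁ k) (elemMap nUm₁ k).2 haxQ.1 haxQ.2
  obtain ⟨n, hOn, hWn, hQn⟩ := hCol
  have hW₂ : perspMap nOm₁ nOm₂ (elemMap nUm₁ k) = ⟨Q, haxQ.2⟩ :=
    persp_eq nOm₁ nOm₂ (elemMap nUm₁ k) haxQ.2 hOn hWn hQn
  exact finish _ hW₂ (Configuration.HasLines.mkLine hXA') haxl₃.2 haxQ.1 haxl₃.1

theorem good_all {κ : Set P} (h6 : LinesHaveAtLeast P L 6) (hT : AxiomT P L)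
    (hsec : SecantProp L κ)
    (hsp : ∀ W₁ W₂ W₃ : P, ∃ R T, R ∈ κ ∧ T ∈ κ ∧ R ≠ T ∧
      R ≠ W₁ ∧ R ≠ W₂ ∧ R ≠ W₃ ∧ T ≠ W₁ ∧ T ≠ W₂ ∧ T ≠ W₃)
    {U V : P} (hUκ : U ∈ κ) (hVκ : V ∈ κ) (hG : GoodPair L κ U V)
    {B F : P} (hBκ : B ∈ κ) (hFκ : F ∈ κ) (hBF : B ≠ F) : GoodPair L κ B F := by
  have hUV : U ≠ V := hG.1
  by_cases hBU : B = U
  · subst hBU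
    by_cases hFV : F = V
    · subst hFV; exact hG
    · exact good_step h6 hT hsec hsp hBκ hVκ hFκ hBF.symm hFV hG
  by_cases hBV : B = V
  · subst hBV
    have hG' : GoodPair L κ B U := good_symm hG
    by_cases hFU : F = U
    · subst hFU; exact hG'
    · exact good_step h6 hT hsec hsp hBκ hUκ hFκ hBF.symm hFU hG'
  -- B is neither U nor V
  have hGUB : GoodPair L κ U B := good_step h6 hT hsec hsp hUκ hVκ hBκ hBU hBV hG
  have hGBU : GoodPair L κ B U := good_symm hGUB
  by_cases hFU : F = U
  · subst hFU; exact hGBU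
  · exact good_step h6 hT hsec hsp hBκ hUκ hFκ hBF.symm hFU hGBU

end PascalAux

open PascalAux in
private lemma pascal_col
    {P L : Type u} [Membership P L] [Configuration.ProjectivePlane P L]
    (h6 : LinesHaveAtLeast P L 6) (hT : AxiomT P L)
    {κ : Set P} (hκ : IsConic P L κ)
    {A B C D E F : P}
    (hAκ : A ∈ κ) (hBκ : B ∈ κ) (hCκ : C ∈ κ) (hDκ : D ∈ κ) (hEκ : E ∈ κ) (hFκ : F ∈ κ)
    (hAB : A ≠ B) (hAC : A ≠ C) (hAD : A ≠ D) (hAE : A ≠ E) (hAF : A ≠ F)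
    (hBC : B ≠ C) (hBD : B ≠ D) (hBE : B ≠ E) (hBF : B ≠ F)
    (hCD : C ≠ D) (hCE : C ≠ E) (hCF : C ≠ F)
    (hDE : D ≠ E) (hDF : D ≠ F) (hEF : E ≠ F)
    {lab lde lbc lef lcd lfa : L}
    (hA1 : A ∈ lab) (hB1 : B ∈ lab) (hD2 : D ∈ lde) (hE2 : E ∈ lde)
    (hB3 : B ∈ lbc) (hC3 : C ∈ lbc) (hE4 : E ∈ lef) (hF4 : F ∈ lef)
    (hC5 : C ∈ lcd) (hD5 : D ∈ lcd) (hF6 : F ∈ lfa) (hA6 : A ∈ lfa)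
    {X Y Z : P} (hX1 : X ∈ lab) (hX2 : X ∈ lde) (hY1 : Y ∈ lbc) (hY2 : Y ∈ lef)
    (hZ1 : Z ∈ lcd) (hZ2 : Z ∈ lfa) : Col P L X Y Z := by
  obtain ⟨U, V, π, hUV, hπ, hnp, rfl⟩ := hκ
  have hsec : SecantProp L (conicSet P L U V π) := secant_conic hUV hπ hnp hT
  have hsp := fun W₁ W₂ W₃ => conic_spare hUV hπ hnp h6 W₁ W₂ W₃
  have hGBF : GoodPair L (conicSet P L U V π) B F :=
    good_all h6 hT hsec hsp (mem_conic_left hUV hπ) (mem_conic_right hUV)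
      (good_base hUV hπ) hBκ hFκ hBF
  exact specialPascal h6 hT hsec hAκ hBκ hCκ hDκ hEκ hFκ
    hAB hAC hAD hAE hAF hBC hBD hBE hBF hCD hCE hCF hDE hDF hEF hGBF
    hA1 hB1 hB3 hC3 hC5 hD5 hD2 hE2 hE4 hF4 hF6 hA6
    hX1 hX2 hY1 hY2 hZ1 hZ2

/-- **Pascal's Theorem.** Let `ABCDEF` be a simple hexagon inscribed in a conic
`κ` (six distinct points of `κ`).  Then the pairs of opposite sides
`(AB, DE)`, `(BC, EF)`, `(CD, FA)` consist of distinct lines, and the three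
points of intersection `AB·DE`, `BC·EF`, `CD·FA` are pairwise distinct and
collinear. -/
theorem pascal
    [Configuration.ProjectivePlane P L]
    (h6 : LinesHaveAtLeast P L 6) (hT : AxiomT P L)
    (κ : Set P) (hκ : IsConic P L κ)
    (A B C D E F : P)
    (hAκ : A ∈ κ) (hBκ : B ∈ κ) (hCκ : C ∈ κ) (hDκ : D ∈ κ) (hEκ : E ∈ κ) (hFκ : F ∈ κ)
    (hAB : A ≠ B) (hAC : A ≠ C) (hAD : A ≠ D) (hAE : A ≠ E) (hAF : A ≠ F)
    (hBC : B ≠ C) (hBD : B ≠ D) (hBE : B ≠ E) (hBF : B ≠ F)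
    (hCD : C ≠ D) (hCE : C ≠ E) (hCF : C ≠ F)
    (hDE : D ≠ E) (hDF : D ≠ F) (hEF : E ≠ F) :
    ∀ lab lde lbc lef lcd lfa : L,
      A ∈ lab → B ∈ lab → D ∈ lde → E ∈ lde →
      B ∈ lbc → C ∈ lbc → E ∈ lef → F ∈ lef →
      C ∈ lcd → D ∈ lcd → F ∈ lfa → A ∈ lfa →
      lab ≠ lde ∧ lbc ≠ lef ∧ lcd ≠ lfa ∧
      ∀ X Y Z : P, X ∈ lab → X ∈ lde → Y ∈ lbc → Y ∈ lef → Z ∈ lcd → Z ∈ lfa →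
        X ≠ Y ∧ X ≠ Z ∧ Y ≠ Z ∧ Col P L X Y Z := by
  intro lab lde lbc lef lcd lfa hA1 hB1 hD2 hE2 hB3 hC3 hE4 hF4 hC5 hD5 hF6 hA6
  have hsec : PascalAux.SecantProp L κ := by
    obtain ⟨U, V, π, hUV, hπ, hnp, hkeq⟩ := hκ
    subst hkeq
    exact PascalAux.secant_conic hUV hπ hnp hT
  have nAlde : A ∉ lde := PascalAux.notMem_side hsec hAκ hDκ hEκ hAD hAE hDE hD2 hE2
  have nBlef : B ∉ lef := PascalAux.notMem_side hsec hBκ hEκ hFκ hBE hBF hEF hE4 hF4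
  have nClfa : C ∉ lfa := PascalAux.notMem_side hsec hCκ hFκ hAκ hCF (Ne.symm hAC) hAF.symm hF6 hA6
  have nAlbc : A ∉ lbc := PascalAux.notMem_side hsec hAκ hBκ hCκ hAB hAC hBC hB3 hC3
  have nDlef : D ∉ lef := PascalAux.notMem_side hsec hDκ hEκ hFκ hDE hDF hEF hE4 hF4
  have nBlfa : B ∉ lfa := PascalAux.notMem_side hsec hBκ hFκ hAκ hBF (Ne.symm hAB) hAF.symm hF6 hA6
  have nElcd : E ∉ lcd := PascalAux.notMem_side hsec hEκ hCκ hDκ (Ne.symm hCE) (Ne.symm hDE) hCD hC5 hD5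
  have nBlcd : B ∉ lcd := PascalAux.notMem_side hsec hBκ hCκ hDκ hBC hBD hCD hC5 hD5
  have nElfa : E ∉ lfa := PascalAux.notMem_side hsec hEκ hFκ hAκ hEF (Ne.symm hAE) hAF.symm hF6 hA6
  refine ⟨fun h => nAlde (h ▸ hA1), fun h => nBlef (h ▸ hB3), fun h => nClfa (h ▸ hC5),
    fun X Y Z hX1 hX2 hY1 hY2 hZ1 hZ2 => ?_⟩
  have hlab_lbc : lab ≠ lbc := fun h => nAlbc (h ▸ hA1)
  have hlde_lef : lde ≠ lef := fun h => nDlef (h ▸ hD2)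
  have hlab_lfa : lab ≠ lfa := fun h => nBlfa (h ▸ hB1)
  have hlde_lcd : lde ≠ lcd := fun h => nElcd (h ▸ hE2)
  have hlbc_lcd : lbc ≠ lcd := fun h => nBlcd (h ▸ hB3)
  have hlef_lfa : lef ≠ lfa := fun h => nElfa (h ▸ hE4)
  refine ⟨?_, ?_, ?_, ?_⟩
  · intro h
    have h1 : X = B := PascalAux.uniq_pt hlab_lbc hX1 (h ▸ hY1) hB1 hB3
    have h2 : X = E := PascalAux.uniq_pt hlde_lef hX2 (h ▸ hY2) hE2 hE4
    exact hBE (h1 ▸ h2)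
  · intro h
    have h1 : X = A := PascalAux.uniq_pt hlab_lfa hX1 (h ▸ hZ2) hA1 hA6
    have h2 : X = D := PascalAux.uniq_pt hlde_lcd hX2 (h ▸ hZ1) hD2 hD5
    exact hAD (h1 ▸ h2)
  · intro h
    have h1 : Y = C := PascalAux.uniq_pt hlbc_lcd hY1 (h ▸ hZ1) hC3 hC5
    have h2 : Y = F := PascalAux.uniq_pt hlef_lfa hY2 (h ▸ hZ2) hF4 hF6
    exact hCF (h1 ▸ h2)
  · exact pascal_col h6 hT hκ hAκ hBκ hCκ hDκ hEκ hFκ hAB hAC hAD hAE hAF hBC hBD hBE hBF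
      hCD hCE hCF hDE hDF hEF hA1 hB1 hD2 hE2 hB3 hC3 hE4 hF4 hC5 hD5 hF6 hA6
      hX1 hX2 hY1 hY2 hZ1 hZ2
end
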